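/- arXiv:2502.02726 — 3 statements merged into one kernel-verified Lean document; each statement's English description precedes it below -/
import Mathlib

section
/- Γ-limsup inequality via block approximation: For every π_0 ∈ Π(ν_1,…,ν_m) there exists a family (π_ε)_{ε>0} ⊆ Π(ν_1,…,ν_m) with π_ε absolutely continuous with respect to ν_1⊗⋯⊗ν_m for every ε > 0, such that π_ε converges weakly to π_0 as ε → 0⁺ and limsup_{ε→0⁺} [ ∫ c_α dπ_ε + ε · KL(π_ε ‖ ν_1⊗⋯⊗ν_m) ] ≤ ∫ c_α dπ_0. -/
open MeasureTheory ProbabilityTheory Filter Topology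
open scoped ENNReal NNReal

noncomputable section

/-- `ℝ^d` with the Euclidean norm. -/
abbrev Euc (d : ℕ) : Type := EuclideanSpace ℝ (Fin d)

/-- The multimarginal cost `c_α(x₁,…,x_m) = ∑_{i<j} ‖α_i x_i − α_j x_j‖²`. -/
def costα {m d : ℕ} (α : Fin m → ℝ) (x : Fin m → Euc d) : ℝ :=
  ∑ i : Fin m, ∑ j : Fin m, if i < j then ‖α i • x i - α j • x j‖ ^ 2 else 0

open scoped Classical in
/-- Kullback–Leibler divergence, valued in `ℝ≥0∞` (it is nonnegative for probability
measures): `KL(P‖Q) = ∫ log (dP/dQ) dP` when `P ≪ Q` and the integrand is integrable,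
and `∞` otherwise. -/
def KLdiv {E : Type*} [MeasurableSpace E] (P Q : Measure E) : ℝ≥0∞ :=
  if P ≪ Q ∧ Integrable (fun x => Real.log ((P.rnDeriv Q x).toReal)) P
  then ENNReal.ofReal (∫ x, Real.log ((P.rnDeriv Q x).toReal) ∂P) else ⊤

/-- The entropic multimarginal transport functional
`π ↦ ∫ c_α dπ + ε KL(π ‖ ν₁⊗⋯⊗ν_m)`, valued in `ℝ≥0∞`. -/
def entCost {m d : ℕ} (α : Fin m → ℝ) (ε : ℝ) (ν : Fin m → Measure (Euc d))
    (π : Measure (Fin m → Euc d)) : ℝ≥0∞ :=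
  ∫⁻ x, ENNReal.ofReal (costα α x) ∂π + ENNReal.ofReal ε * KLdiv π (Measure.pi ν)

/-- Membership in the coupling set `Π(ν₁,…,ν_m)`: a probability measure on `𝒳^m`
whose `j`-th marginal is `ν j` for every `j`. -/
def IsCoupling {m d : ℕ} (ν : Fin m → Measure (Euc d))
    (π : Measure (Fin m → Euc d)) : Prop :=
  IsProbabilityMeasure π ∧ ∀ j, π.map (fun x => x j) = ν j

end


noncomputable section
namespace BA
variable {d m : ℕ}

lemma meas_coord (i : Fin d) : Measurable (fun y : Euc d => y i) :=
  (measurable_pi_apply (X := fun _ : Fin d => ℝ) i).comp (WithLp.measurable_ofLp 2 _)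

/-- index of the dyadic block containing `y` -/
def idx (n : ℕ) (y : Euc d) : Fin d → ℤ := fun i => ⌊(2^n : ℝ) * y i⌋

lemma measurable_idx (n : ℕ) : Measurable (idx (d := d) n) :=
  measurable_pi_lambda _ fun i => Int.measurable_floor.comp (measurable_const.mul (meas_coord i))

def blk (n : ℕ) (k : Fin d → ℤ) : Set (Euc d) := idx n ⁻¹' {k}

lemma measurableSet_blk (n : ℕ) (k : Fin d → ℤ) : MeasurableSet (blk n k) :=
  (measurable_idx n) (measurableSet_singleton k)

lemma blk_disjoint {n : ℕ} {k k' : Fin d → ℤ} (h : k ≠ k') : Disjoint (blk n k) (blk n k') := by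
  apply Set.disjoint_left.2
  rintro y (hy : idx n y = k) (hy' : idx n y = k')
  exact h (hy ▸ hy')

def Sd (d n : ℕ) : Finset (Fin d → ℤ) := Fintype.piFinset fun _ => Finset.Icc (-(2^n : ℤ)) (2^n)

def Sm (d m n : ℕ) : Finset (Fin m → Fin d → ℤ) := Fintype.piFinset fun _ => Sd d n

lemma idx_mem_Sd {n : ℕ} {y : Euc d} (hy : ∀ i, |y i| ≤ 1) : idx n y ∈ Sd d n := by
  rw [Sd, Fintype.mem_piFinset]
  intro i
  rw [Finset.mem_Icc]
  have h2 : (0:ℝ) < 2^n := by positivity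
  have h1 := abs_le.1 (hy i)
  constructor
  · show -(2^n : ℤ) ≤ ⌊(2^n : ℝ) * y i⌋
    rw [Int.le_floor]
    push_cast
    nlinarith [h1.1]
  · show ⌊(2^n : ℝ) * y i⌋ ≤ (2^n : ℤ)
    have : (2:ℝ)^n * y i ≤ ((2^n : ℤ) : ℝ) := by push_cast; nlinarith [h1.2]
    calc ⌊(2^n : ℝ) * y i⌋ ≤ ⌊((2^n : ℤ) : ℝ)⌋ := Int.floor_le_floor this
    _ = 2^n := Int.floor_intCast _

def Ablk (n : ℕ) (κ : Fin m → Fin d → ℤ) : Set (Fin m → Euc d) :=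
  Set.pi Set.univ fun j => blk n (κ j)

lemma measurableSet_Ablk (n : ℕ) (κ : Fin m → Fin d → ℤ) : MeasurableSet (Ablk (m := m) n κ) :=
  MeasurableSet.univ_pi fun j => measurableSet_blk n (κ j)

lemma Ablk_disjoint {n : ℕ} {κ κ' : Fin m → Fin d → ℤ} (h : κ ≠ κ') :
    Disjoint (Ablk n κ) (Ablk n κ') := by
  obtain ⟨j, hj⟩ := Function.ne_iff.1 h
  apply Set.disjoint_left.2
  intro x hx hx'
  exact Set.disjoint_left.1 (blk_disjoint hj) (hx j trivial) (hx' j trivial)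

lemma mem_Ablk {n : ℕ} {κ : Fin m → Fin d → ℤ} {x : Fin m → Euc d} :
    x ∈ Ablk n κ ↔ ∀ j, idx n (x j) = κ j := by
  simp [Ablk, blk, Set.mem_pi]

/-- coordinatewise distance bound inside one block -/
lemma dist_le_of_idx_eq {n : ℕ} {y z : Euc d} (h : idx n y = idx n z) :
    dist y z ≤ Real.sqrt d * (2^n)⁻¹ := by
  have h2 : (0:ℝ) < 2^n := by positivity
  have hinv : (0:ℝ) ≤ ((2:ℝ)^n)⁻¹ := by positivity
  have hcoord : ∀ i, dist (y i) (z i) ≤ ((2:ℝ)^n)⁻¹ := by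
    intro i
    have h3 := Int.abs_sub_lt_one_of_floor_eq_floor (R := ℝ) (congrFun h i)
    rw [Real.dist_eq]
    rw [show (2:ℝ)^n * y i - 2^n * z i = 2^n * (y i - z i) by ring, abs_mul,
      abs_of_pos h2] at h3
    rw [inv_eq_one_div, le_div_iff₀ h2]
    nlinarith [abs_nonneg (y i - z i)]
  rw [EuclideanSpace.dist_eq]
  have hsum : ∑ i, dist (y i) (z i) ^ 2 ≤ (d : ℝ) * (((2:ℝ)^n)⁻¹)^2 := by
    have hb : ∀ i ∈ Finset.univ, dist (y i) (z i) ^ 2 ≤ (((2:ℝ)^n)⁻¹)^2 :=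
      fun i _ => pow_le_pow_left₀ dist_nonneg (hcoord i) 2
    have := Finset.sum_le_card_nsmul Finset.univ _ _ hb
    simpa [nsmul_eq_mul] using this
  have h1 : Real.sqrt (∑ i, dist (y i) (z i) ^ 2) ≤ Real.sqrt ((d : ℝ) * (((2:ℝ)^n)⁻¹)^2) :=
    Real.sqrt_le_sqrt hsum
  have h2' : Real.sqrt ((d : ℝ) * (((2:ℝ)^n)⁻¹)^2) = Real.sqrt d * ((2:ℝ)^n)⁻¹ := by
    rw [Real.sqrt_mul (by positivity : (0:ℝ) ≤ (d:ℝ)), Real.sqrt_sq hinv]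
  linarith

/-- center point of a block -/
def ctr (n : ℕ) (k : Fin d → ℤ) : Euc d := (EuclideanSpace.equiv (Fin d) ℝ).symm
  (fun i => (k i : ℝ) / 2^n)

lemma ctr_mem_blk (n : ℕ) (k : Fin d → ℤ) : ctr n k ∈ blk n k := by
  show idx n (ctr n k) = k
  funext i
  show ⌊(2^n : ℝ) * ((k i : ℝ) / 2^n)⌋ = k i
  have h2 : (0:ℝ) < 2^n := by positivity
  rw [mul_div_cancel₀ _ (ne_of_gt h2), Int.floor_intCast]

/-- membership in `Sd`-indexed block gives coordinate bounds -/
lemma abs_le_two_of_mem_blk {n : ℕ} {k : Fin d → ℤ} (hk : k ∈ Sd d n) {y : Euc d}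
    (hy : y ∈ blk n k) (i : Fin d) : |y i| ≤ 2 := by
  have h2 : (0:ℝ) < 2^n := by positivity
  rw [Sd, Fintype.mem_piFinset] at hk
  have hki := Finset.mem_Icc.1 (hk i)
  have hfl : ⌊(2^n : ℝ) * y i⌋ = k i := congrFun hy i
  have h1 : ((k i : ℝ)) ≤ 2^n * y i := by rw [← hfl]; exact Int.floor_le _
  have h2' : (2:ℝ)^n * y i < k i + 1 := by rw [← hfl]; exact Int.lt_floor_add_one _
  have hlo : ((-(2^n : ℤ) : ℤ) : ℝ) ≤ k i := by exact_mod_cast hki.1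
  have hhi : ((k i : ℤ) : ℝ) ≤ ((2^n : ℤ) : ℝ) := by exact_mod_cast hki.2
  push_cast at hlo hhi
  rw [abs_le]
  have hone : (1:ℝ) ≤ 2^n := one_le_pow₀ (by norm_num)
  constructor <;> nlinarith

lemma norm_le_of_mem_blk {n : ℕ} {k : Fin d → ℤ} (hk : k ∈ Sd d n) {y : Euc d}
    (hy : y ∈ blk n k) : ‖y‖ ≤ 2 * Real.sqrt d := by
  rw [EuclideanSpace.norm_eq]
  have hsum : ∑ i, ‖y i‖ ^ 2 ≤ (d : ℝ) * 4 := by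
    have hb : ∀ i ∈ Finset.univ, ‖y i‖ ^ 2 ≤ (4:ℝ) := by
      intro i _
      have h4 := abs_le_two_of_mem_blk hk hy i
      have h5 := abs_nonneg (y i)
      rw [Real.norm_eq_abs]
      nlinarith
    have := Finset.sum_le_card_nsmul Finset.univ _ _ hb
    simpa [nsmul_eq_mul, mul_comm] using this
  have h1 : Real.sqrt (∑ i, ‖y i‖^2) ≤ Real.sqrt ((d:ℝ) * 4) := Real.sqrt_le_sqrt hsum
  have h2' : Real.sqrt ((d:ℝ) * 4) = 2 * Real.sqrt d := by
    rw [show (d:ℝ) * 4 = 2^2 * d by ring, Real.sqrt_mul (by positivity : (0:ℝ) ≤ 2^2),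
      Real.sqrt_sq (by norm_num : (0:ℝ) ≤ 2)]
  linarith


section Measures
variable {𝒳 : Set (Euc d)} {ν : Fin m → Measure (Euc d)} {π₀ : Measure (Fin m → Euc d)}

lemma sigmaFinite_of_prob (hν : ∀ j, IsProbabilityMeasure (ν j)) : ∀ j, SigmaFinite (ν j) :=
  fun j => by haveI := hν j; infer_instance

/-- the set where all coordinates lie in `𝒳` -/
def Xm (𝒳 : Set (Euc d)) (m : ℕ) : Set (Fin m → Euc d) := ⋂ j : Fin m, (fun x => x j) ⁻¹' 𝒳

lemma meas_sandwich {α : Type*} [MeasurableSpace α] (μ : Measure α) {U A N : Set α}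
    (hUA : U ⊆ A) (hAU : A ⊆ U ∪ N) (hN : μ N = 0) : μ U = μ A :=
  le_antisymm (measure_mono hUA)
    (le_trans (measure_mono hAU) (le_trans (measure_union_le U N) (by rw [hN, add_zero])))

lemma marg_apply (hπ₀m : ∀ j, π₀.map (fun x => x j) = ν j) (j : Fin m) {B : Set (Euc d)}
    (hB : MeasurableSet B) : π₀ ((fun x : Fin m → Euc d => x j) ⁻¹' B) = ν j B := by
  rw [← hπ₀m j, Measure.map_apply (measurable_pi_apply j) hB]

lemma Xm_compl_null (hνsupp : ∀ j, ν j 𝒳 = 1) (h𝒳m : MeasurableSet 𝒳)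
    (hν : ∀ j, IsProbabilityMeasure (ν j))
    (hπ₀m : ∀ j, π₀.map (fun x => x j) = ν j) : π₀ (Xm 𝒳 m)ᶜ = 0 := by
  rw [Xm, Set.compl_iInter]
  refine measure_iUnion_null fun j => ?_
  rw [← Set.preimage_compl, marg_apply hπ₀m j h𝒳m.compl]
  haveI := hν j
  exact (prob_compl_eq_zero_iff h𝒳m).2 (hνsupp j)

lemma Xm_subset_biUnion (h𝒳b : ∀ x ∈ 𝒳, ∀ i : Fin d, |x i| ≤ 1) (n : ℕ) :
    Xm 𝒳 m ⊆ ⋃ κ ∈ Sm d m n, Ablk n κ := by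
  intro x hx
  have hx' : ∀ j, x j ∈ 𝒳 := fun j => Set.mem_iInter.1 hx j
  have h1 : (fun j => idx n (x j)) ∈ Sm d m n := by
    rw [Sm, Fintype.mem_piFinset]
    exact fun j => idx_mem_Sd (h𝒳b _ (hx' j))
  exact Set.mem_biUnion h1 (mem_Ablk.2 fun j => rfl)

/-- the weights of the block approximation -/
def wt (ν : Fin m → Measure (Euc d)) (π₀ : Measure (Fin m → Euc d)) (n : ℕ)
    (κ : Fin m → Fin d → ℤ) : ℝ≥0∞ :=
  π₀ (Ablk n κ) / ∏ j, ν j (blk n (κ j))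

/-- the density of the block approximation -/
def dens (ν : Fin m → Measure (Euc d)) (π₀ : Measure (Fin m → Euc d)) (n : ℕ)
    (x : Fin m → Euc d) : ℝ≥0∞ :=
  ∑ κ ∈ Sm d m n, wt ν π₀ n κ * (Ablk n κ).indicator 1 x

lemma measurable_dens (n : ℕ) : Measurable (dens ν π₀ n) := by
  refine Finset.measurable_sum _ fun κ _ => ?_
  exact (measurable_const.indicator (measurableSet_Ablk n κ)).const_mul _

/-- the block approximation measure -/
def piA (ν : Fin m → Measure (Euc d)) (π₀ : Measure (Fin m → Euc d)) (n : ℕ) :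
    Measure (Fin m → Euc d) :=
  (Measure.pi ν).withDensity (dens ν π₀ n)

lemma piA_ac (n : ℕ) : piA ν π₀ n ≪ Measure.pi ν := withDensity_absolutelyContinuous _ _

lemma pi_Ablk (hν : ∀ j, IsProbabilityMeasure (ν j)) (n : ℕ) (κ : Fin m → Fin d → ℤ) :
    Measure.pi ν (Ablk n κ) = ∏ j, ν j (blk n (κ j)) := by
  haveI := sigmaFinite_of_prob hν
  exact Measure.pi_pi ν _

lemma pi0_Ablk_le (hπ₀m : ∀ j, π₀.map (fun x => x j) = ν j) (n : ℕ)
    (κ : Fin m → Fin d → ℤ) (j : Fin m) : π₀ (Ablk n κ) ≤ ν j (blk n (κ j)) := by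
  rw [← marg_apply hπ₀m j (measurableSet_blk n (κ j))]
  exact measure_mono fun x hx => hx j trivial

lemma wt_mul (hν : ∀ j, IsProbabilityMeasure (ν j))
    (hπ₀m : ∀ j, π₀.map (fun x => x j) = ν j) (n : ℕ) (κ : Fin m → Fin d → ℤ) :
    wt ν π₀ n κ * ∏ j, ν j (blk n (κ j)) = π₀ (Ablk n κ) := by
  by_cases h0 : ∏ j, ν j (blk n (κ j)) = 0
  · obtain ⟨j, -, hj⟩ := Finset.prod_eq_zero_iff.1 h0
    have : π₀ (Ablk n κ) = 0 := le_antisymm (hj ▸ pi0_Ablk_le hπ₀m n κ j) zero_le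
    simp [wt, this, h0]
  · have htop : (∏ j, ν j (blk n (κ j))) ≠ ⊤ := by
      refine (ENNReal.prod_lt_top fun j _ => ?_).ne
      haveI := hν j
      exact (measure_lt_top (ν j) _)
    exact ENNReal.div_mul_cancel h0 htop

lemma piA_apply (hν : ∀ j, IsProbabilityMeasure (ν j)) (n : ℕ) {E : Set (Fin m → Euc d)}
    (hE : MeasurableSet E) :
    piA ν π₀ n E = ∑ κ ∈ Sm d m n, wt ν π₀ n κ * Measure.pi ν (Ablk n κ ∩ E) := by
  rw [piA, withDensity_apply _ hE]
  have : ∀ x, dens ν π₀ n x = ∑ κ ∈ Sm d m n, wt ν π₀ n κ * (Ablk n κ).indicator 1 x :=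
    fun x => rfl
  rw [lintegral_congr this, lintegral_finset_sum
    (f := fun κ a => wt ν π₀ n κ * (Ablk n κ).indicator 1 a) _ (fun κ _ =>
    (measurable_const.indicator (measurableSet_Ablk n κ)).const_mul _)]
  refine Finset.sum_congr rfl fun κ _ => ?_
  rw [lintegral_const_mul (f := fun a => (Ablk n κ).indicator 1 a) _
    (measurable_const.indicator (measurableSet_Ablk n κ)),
    lintegral_indicator_one (measurableSet_Ablk n κ), Measure.restrict_apply
    (measurableSet_Ablk n κ)]

lemma piA_Ablk (hν : ∀ j, IsProbabilityMeasure (ν j))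
    (hπ₀m : ∀ j, π₀.map (fun x => x j) = ν j) {n : ℕ} {κ : Fin m → Fin d → ℤ}
    (hκ : κ ∈ Sm d m n) : piA ν π₀ n (Ablk n κ) = π₀ (Ablk n κ) := by
  rw [piA_apply hν n (measurableSet_Ablk n κ)]
  rw [Finset.sum_eq_single_of_mem κ hκ]
  · rw [Set.inter_self, pi_Ablk hν, wt_mul hν hπ₀m]
  · intro κ' _ hne
    rw [Set.disjoint_iff_inter_eq_empty.1 (Ablk_disjoint hne), measure_empty, mul_zero]

lemma pi0_sum_fiber (hν : ∀ j, IsProbabilityMeasure (ν j))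
    (hπ₀m : ∀ j, π₀.map (fun x => x j) = ν j) (hνsupp : ∀ j, ν j 𝒳 = 1)
    (h𝒳m : MeasurableSet 𝒳) (h𝒳b : ∀ x ∈ 𝒳, ∀ i : Fin d, |x i| ≤ 1)
    (n : ℕ) (j : Fin m) (k : Fin d → ℤ) :
    ∑ κ ∈ (Sm d m n).filter (fun κ => κ j = k), π₀ (Ablk n κ) = ν j (blk n k) := by
  classical
  rw [← measure_biUnion_finset ?hd (fun κ _ => measurableSet_Ablk n κ)]
  case hd =>
    intro κ hκ κ' hκ' hne
    exact Ablk_disjoint hne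
  rw [← marg_apply hπ₀m j (measurableSet_blk n k)]
  refine meas_sandwich π₀ ?_ ?_ (Xm_compl_null hνsupp h𝒳m hν hπ₀m)
  · rintro x hx
    simp only [Set.mem_iUnion] at hx
    obtain ⟨κ, hκ, hxκ⟩ := hx
    have := (Finset.mem_filter.1 hκ).2
    exact Set.mem_preimage.2 (by rw [← this]; exact hxκ j trivial)
  · intro x hx
    by_cases hxm : x ∈ Xm 𝒳 m
    · left
      have hx' : ∀ l, x l ∈ 𝒳 := fun l => Set.mem_iInter.1 hxm l
      have h1 : (fun l => idx n (x l)) ∈ Sm d m n := by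
        rw [Sm, Fintype.mem_piFinset]
        exact fun l => idx_mem_Sd (h𝒳b _ (hx' l))
      have h2 : idx n (x j) = k := hx
      simp only [Set.mem_iUnion]
      exact ⟨fun l => idx n (x l), Finset.mem_filter.2 ⟨h1, h2⟩, mem_Ablk.2 fun l => rfl⟩
    · right; exact hxm

lemma pi0_sum_Sm (hν : ∀ j, IsProbabilityMeasure (ν j)) (hπ₀p : IsProbabilityMeasure π₀)
    (hπ₀m : ∀ j, π₀.map (fun x => x j) = ν j) (hνsupp : ∀ j, ν j 𝒳 = 1)
    (h𝒳m : MeasurableSet 𝒳) (h𝒳b : ∀ x ∈ 𝒳, ∀ i : Fin d, |x i| ≤ 1) (n : ℕ) :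
    ∑ κ ∈ Sm d m n, π₀ (Ablk n κ) = 1 := by
  rw [← measure_biUnion_finset (fun κ _ κ' _ hne => Ablk_disjoint hne)
    (fun κ _ => measurableSet_Ablk n κ)]
  rw [meas_sandwich π₀ (Set.subset_univ _)
    (fun x _ => (em (x ∈ Xm 𝒳 m)).imp (fun h => Xm_subset_biUnion h𝒳b n h) id)
    (Xm_compl_null hνsupp h𝒳m hν hπ₀m)]
  exact measure_univ

lemma piA_isProbability (hν : ∀ j, IsProbabilityMeasure (ν j)) (hπ₀p : IsProbabilityMeasure π₀)
    (hπ₀m : ∀ j, π₀.map (fun x => x j) = ν j) (hνsupp : ∀ j, ν j 𝒳 = 1)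
    (h𝒳m : MeasurableSet 𝒳) (h𝒳b : ∀ x ∈ 𝒳, ∀ i : Fin d, |x i| ≤ 1) (n : ℕ) :
    IsProbabilityMeasure (piA ν π₀ n) := by
  constructor
  rw [piA_apply hν n MeasurableSet.univ]
  have : ∀ κ ∈ Sm d m n, wt ν π₀ n κ * Measure.pi ν (Ablk n κ ∩ Set.univ) = π₀ (Ablk n κ) := by
    intro κ _
    rw [Set.inter_univ, pi_Ablk hν, wt_mul hν hπ₀m]
  rw [Finset.sum_congr rfl this]
  exact pi0_sum_Sm hν hπ₀p hπ₀m hνsupp h𝒳m h𝒳b n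

lemma piA_map (hν : ∀ j, IsProbabilityMeasure (ν j)) (hπ₀m : ∀ j, π₀.map (fun x => x j) = ν j)
    (hνsupp : ∀ j, ν j 𝒳 = 1) (h𝒳m : MeasurableSet 𝒳)
    (h𝒳b : ∀ x ∈ 𝒳, ∀ i : Fin d, |x i| ≤ 1) (n : ℕ) (j : Fin m) :
    (piA ν π₀ n).map (fun x => x j) = ν j := by
  classical
  haveI := sigmaFinite_of_prob hν
  ext E hE
  rw [Measure.map_apply (measurable_pi_apply j) hE, piA_apply hν n ((measurable_pi_apply j) hE)]
  have hterm : ∀ κ ∈ Sm d m n,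
      wt ν π₀ n κ * Measure.pi ν (Ablk n κ ∩ (fun x : Fin m → Euc d => x j) ⁻¹' E)
      = π₀ (Ablk n κ) * (ν j (blk n (κ j) ∩ E) / ν j (blk n (κ j))) := by
    intro κ _
    -- rewrite the intersection as a product set
    have hset : Ablk n κ ∩ (fun x : Fin m → Euc d => x j) ⁻¹' E =
        Set.pi Set.univ (Function.update (fun l => blk n (κ l)) j (blk n (κ j) ∩ E)) := by
      ext x
      simp only [Set.mem_inter_iff, Ablk, Set.mem_pi, Set.mem_univ, forall_true_left,
        Set.mem_preimage]
      constructor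
      · rintro ⟨h1, h2⟩ l
        rcases eq_or_ne l j with rfl | hl
        · rw [Function.update_self]; exact ⟨h1 l, h2⟩
        · rw [Function.update_of_ne hl]; exact h1 l
      · intro h
        refine ⟨fun l => ?_, ?_⟩
        · rcases eq_or_ne l j with rfl | hl
          · have := h l; rw [Function.update_self] at this; exact this.1
          · have := h l; rwa [Function.update_of_ne hl] at this
        · have := h j; rw [Function.update_self] at this; exact this.2
    set a := ν j (blk n (κ j)) with ha_def
    set c := ν j (blk n (κ j) ∩ E) with hc_def
    set P := ∏ l ∈ Finset.univ \ {j}, ν l (blk n (κ l)) with hP_def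
    have hprod1 : Measure.pi ν (Ablk n κ ∩ (fun x : Fin m → Euc d => x j) ⁻¹' E) = c * P := by
      rw [hset, Measure.pi_pi, Finset.prod_eq_mul_prod_sdiff_singleton_of_mem (Finset.mem_univ j)]
      rw [Function.update_self]
      congr 1
      refine Finset.prod_congr rfl fun l hl => ?_
      have hlj : l ≠ j := by
        intro h
        exact (Finset.mem_sdiff.1 hl).2 (Finset.mem_singleton.2 h)
      rw [Function.update_of_ne hlj]
    have hprod2 : (∏ l, ν l (blk n (κ l))) = a * P := by
      rw [Finset.prod_eq_mul_prod_sdiff_singleton_of_mem (Finset.mem_univ j)]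
    rw [wt, hprod1, hprod2]
    by_cases h0 : π₀ (Ablk n κ) = 0
    · rw [h0, ENNReal.zero_div, zero_mul, zero_mul]
    · have ha0 : a ≠ 0 := fun h => h0 (le_antisymm (h ▸ pi0_Ablk_le hπ₀m n κ j) zero_le)
      have hP0 : P ≠ 0 := by
        rw [hP_def, Finset.prod_ne_zero_iff]
        intro l _
        exact fun h => h0 (le_antisymm (h ▸ pi0_Ablk_le hπ₀m n κ l) zero_le)
      have hatop : a ≠ ⊤ := by haveI := hν j; exact (measure_lt_top (ν j) _).ne
      have hPtop : P ≠ ⊤ := by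
        refine (ENNReal.prod_lt_top fun l _ => ?_).ne
        haveI := hν l
        exact measure_lt_top (ν l) _
      rw [div_eq_mul_inv, ENNReal.mul_inv (Or.inl ha0) (Or.inr hP0), div_eq_mul_inv]
      rw [show π₀ (Ablk n κ) * (a⁻¹ * P⁻¹) * (c * P) = π₀ (Ablk n κ) * (c * a⁻¹) * (P⁻¹ * P)
        by ring]
      rw [ENNReal.inv_mul_cancel hP0 hPtop, mul_one]
  rw [Finset.sum_congr rfl hterm]
  have hmap : ∀ κ ∈ Sm d m n, κ j ∈ Sd d n := by
    intro κ hκ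
    rw [Sm, Fintype.mem_piFinset] at hκ
    exact hκ j
  rw [← Finset.sum_fiberwise_of_maps_to hmap
    (fun κ => π₀ (Ablk n κ) * (ν j (blk n (κ j) ∩ E) / ν j (blk n (κ j))))]
  have hinner : ∀ k ∈ Sd d n,
      (∑ κ ∈ (Sm d m n).filter (fun κ => κ j = k),
        π₀ (Ablk n κ) * (ν j (blk n (κ j) ∩ E) / ν j (blk n (κ j))))
      = ν j (blk n k ∩ E) := by
    intro k _
    have : ∀ κ ∈ (Sm d m n).filter (fun κ => κ j = k),
        π₀ (Ablk n κ) * (ν j (blk n (κ j) ∩ E) / ν j (blk n (κ j)))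
        = π₀ (Ablk n κ) * (ν j (blk n k ∩ E) / ν j (blk n k)) := by
      intro κ hκ
      rw [(Finset.mem_filter.1 hκ).2]
    rw [Finset.sum_congr rfl this, ← Finset.sum_mul,
      pi0_sum_fiber hν hπ₀m hνsupp h𝒳m h𝒳b n j k]
    by_cases ha : ν j (blk n k) = 0
    · have hc : ν j (blk n k ∩ E) = 0 :=
        le_antisymm (ha ▸ measure_mono Set.inter_subset_left) zero_le
      rw [ha, hc, ENNReal.zero_div, mul_zero]
    · have hatop : ν j (blk n k) ≠ ⊤ := by haveI := hν j; exact (measure_lt_top (ν j) _).ne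
      exact ENNReal.mul_div_cancel ha hatop
  rw [Finset.sum_congr rfl hinner]
  rw [← measure_biUnion_finset (fun k _ k' _ hne =>
    (blk_disjoint hne).mono Set.inter_subset_left Set.inter_subset_left)
    (fun k _ => (measurableSet_blk n k).inter (hE))]
  refine meas_sandwich (ν j) ?_ ?_ ((prob_compl_eq_zero_iff h𝒳m).2 (hνsupp j))
  · intro y hy
    simp only [Set.mem_iUnion] at hy
    obtain ⟨k, _, hk⟩ := hy
    exact hk.2
  · intro y hy
    by_cases hy𝒳 : y ∈ 𝒳
    · left
      simp only [Set.mem_iUnion]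
      exact ⟨idx n y, idx_mem_Sd (h𝒳b y hy𝒳), rfl, hy⟩
    · right; exact hy𝒳


lemma KLdiv_piA_ne_top (hν : ∀ j, IsProbabilityMeasure (ν j)) (hπ₀p : IsProbabilityMeasure π₀)
    (hπ₀m : ∀ j, π₀.map (fun x => x j) = ν j) (hνsupp : ∀ j, ν j 𝒳 = 1)
    (h𝒳m : MeasurableSet 𝒳) (h𝒳b : ∀ x ∈ 𝒳, ∀ i : Fin d, |x i| ≤ 1) (n : ℕ) :
    KLdiv (piA ν π₀ n) (Measure.pi ν) ≠ ⊤ := by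
  classical
  haveI := sigmaFinite_of_prob hν
  haveI : IsProbabilityMeasure (piA ν π₀ n) :=
    piA_isProbability hν hπ₀p hπ₀m hνsupp h𝒳m h𝒳b n
  have hrn : (piA ν π₀ n).rnDeriv (Measure.pi ν) =ᵐ[Measure.pi ν] dens ν π₀ n :=
    Measure.rnDeriv_withDensity _ (measurable_dens n)
  have hrn' : (piA ν π₀ n).rnDeriv (Measure.pi ν) =ᵐ[piA ν π₀ n] dens ν π₀ n :=
    hrn.filter_mono (piA_ac n).ae_le
  have hint : Integrable (fun x => Real.log (((piA ν π₀ n).rnDeriv (Measure.pi ν) x).toReal))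
      (piA ν π₀ n) := by
    have heq : (fun x => Real.log (((piA ν π₀ n).rnDeriv (Measure.pi ν) x).toReal))
        =ᵐ[piA ν π₀ n] (fun x => Real.log ((dens ν π₀ n x).toReal)) := by
      filter_upwards [hrn'] with x hx
      rw [hx]
    refine (Integrable.congr ?_ heq.symm)
    set C := ∑ κ ∈ Sm d m n, |Real.log ((wt ν π₀ n κ).toReal)| with hC
    have hCnn : ∀ x, |Real.log ((dens ν π₀ n x).toReal)| ≤ C := by
      intro x
      by_cases hx : ∃ κ ∈ Sm d m n, x ∈ Ablk n κ
      · obtain ⟨κ, hκ, hxκ⟩ := hx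
        have hdx : dens ν π₀ n x = wt ν π₀ n κ := by
          rw [dens, Finset.sum_eq_single_of_mem κ hκ]
          · rw [Set.indicator_of_mem hxκ, Pi.one_apply, mul_one]
          · intro κ' _ hne
            rw [Set.indicator_of_notMem
              (Set.disjoint_left.1 (Ablk_disjoint hne.symm) hxκ), mul_zero]
        rw [hdx]
        exact Finset.single_le_sum (f := fun κ => |Real.log ((wt ν π₀ n κ).toReal)|)
          (fun κ' _ => abs_nonneg _) hκ
      · push_neg at hx
        have hdx : dens ν π₀ n x = 0 := by
          rw [dens]
          refine Finset.sum_eq_zero fun κ hκ => ?_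
          rw [Set.indicator_of_notMem (hx κ hκ), mul_zero]
        rw [hdx]
        simp only [ENNReal.toReal_zero, Real.log_zero, abs_zero]
        exact Finset.sum_nonneg fun κ _ => abs_nonneg _
    refine Integrable.mono' (integrable_const C) ?_ (Filter.Eventually.of_forall fun x => ?_)
    · exact (Real.measurable_log.comp
        (ENNReal.measurable_toReal.comp (measurable_dens n))).aestronglyMeasurable
    · exact (Real.norm_eq_abs _).le.trans (hCnn x)
  rw [KLdiv, if_pos ⟨piA_ac n, hint⟩]
  exact ENNReal.ofReal_ne_top


/-- the compact carrier set -/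
def Kset (d m : ℕ) : Set (Fin m → Euc d) :=
  Set.pi Set.univ fun _ : Fin m => Metric.closedBall (0 : Euc d) (2 * Real.sqrt d)

lemma isCompact_Kset : IsCompact (Kset d m) :=
  isCompact_univ_pi fun _ => isCompact_closedBall _ _

lemma Ablk_subset_Kset {n : ℕ} {κ : Fin m → Fin d → ℤ} (hκ : κ ∈ Sm d m n) :
    Ablk n κ ⊆ Kset d m := by
  intro x hx j _
  rw [Sm, Fintype.mem_piFinset] at hκ
  rw [mem_closedBall_zero_iff]
  exact norm_le_of_mem_blk (hκ j) (hx j trivial)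

/-- the union of all relevant blocks -/
def Ublk (d m n : ℕ) : Set (Fin m → Euc d) := ⋃ κ ∈ Sm d m n, Ablk n κ

lemma measurableSet_Ublk (n : ℕ) : MeasurableSet (Ublk d m n) :=
  (Sm d m n).measurableSet_biUnion fun κ _ => measurableSet_Ablk n κ

lemma Ublk_subset_Kset (n : ℕ) : Ublk d m n ⊆ Kset d m := by
  refine Set.iUnion₂_subset fun κ hκ => Ablk_subset_Kset hκ

lemma pi0_Ublk_compl_null (hν : ∀ j, IsProbabilityMeasure (ν j))
    (hπ₀m : ∀ j, π₀.map (fun x => x j) = ν j) (hνsupp : ∀ j, ν j 𝒳 = 1)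
    (h𝒳m : MeasurableSet 𝒳) (h𝒳b : ∀ x ∈ 𝒳, ∀ i : Fin d, |x i| ≤ 1) (n : ℕ) :
    π₀ (Ublk d m n)ᶜ = 0 :=
  le_antisymm (le_trans (measure_mono (Set.compl_subset_compl.2 (Xm_subset_biUnion h𝒳b n)))
    (Xm_compl_null hνsupp h𝒳m hν hπ₀m).le) zero_le

lemma piA_Ublk_compl_null (hν : ∀ j, IsProbabilityMeasure (ν j)) (n : ℕ) :
    piA ν π₀ n (Ublk d m n)ᶜ = 0 := by
  rw [piA_apply hν n (measurableSet_Ublk n).compl]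
  refine Finset.sum_eq_zero fun κ hκ => ?_
  have h1 : Ablk n κ ∩ (Ublk d m n)ᶜ = ∅ := by
    rw [Set.eq_empty_iff_forall_notMem]
    rintro x ⟨hx1, hx2⟩
    exact hx2 (Set.mem_biUnion hκ hx1)
  rw [h1, measure_empty, mul_zero]

lemma integrable_of_compl_null {μ : Measure (Fin m → Euc d)} [IsFiniteMeasure μ]
    (hμ : μ (Kset d m)ᶜ = 0) {f : (Fin m → Euc d) → ℝ} (hf : Continuous f) :
    Integrable f μ := by
  obtain ⟨C, hC⟩ := (isCompact_Kset (d := d) (m := m)).exists_bound_of_continuousOn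
    hf.continuousOn
  refine Integrable.mono' (integrable_const C) hf.aestronglyMeasurable ?_
  have hae : ∀ᵐ x ∂μ, x ∈ Kset d m := by
    rw [ae_iff]
    exact hμ
  filter_upwards [hae] with x hx
  exact hC x hx

lemma integral_eq_sum_blocks {μ : Measure (Fin m → Euc d)} [IsFiniteMeasure μ] (n : ℕ)
    (hμU : μ (Ublk d m n)ᶜ = 0) {f : (Fin m → Euc d) → ℝ} (hInt : Integrable f μ) :
    ∫ x, f x ∂μ = ∑ κ ∈ Sm d m n, ∫ x in Ablk n κ, f x ∂μ := by
  rw [← integral_add_compl (measurableSet_Ublk (d := d) (m := m) n) hInt,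
    setIntegral_measure_zero _ hμU, add_zero, Ublk,
    integral_biUnion_finset _ (fun κ _ => measurableSet_Ablk n κ)
      (fun κ _ κ' _ hne => Ablk_disjoint hne) (fun κ _ => hInt.integrableOn)]


lemma ctrm_mem_Ablk (n : ℕ) (κ : Fin m → Fin d → ℤ) :
    (fun j => ctr n (κ j)) ∈ Ablk n κ :=
  mem_Ablk.2 fun j => ctr_mem_blk n (κ j)

lemma tendsto_integral_piA (hν : ∀ j, IsProbabilityMeasure (ν j))
    (hπ₀p : IsProbabilityMeasure π₀)
    (hπ₀m : ∀ j, π₀.map (fun x => x j) = ν j) (hνsupp : ∀ j, ν j 𝒳 = 1)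
    (h𝒳m : MeasurableSet 𝒳) (h𝒳b : ∀ x ∈ 𝒳, ∀ i : Fin d, |x i| ≤ 1)
    {f : (Fin m → Euc d) → ℝ} (hf : Continuous f) :
    Tendsto (fun n => ∫ x, f x ∂(piA ν π₀ n)) atTop (𝓝 (∫ x, f x ∂π₀)) := by
  haveI := fun n => piA_isProbability (π₀ := π₀) hν hπ₀p hπ₀m hνsupp h𝒳m h𝒳b n
  have hKc : IsCompact (Kset d m) := isCompact_Kset
  -- null sets
  have hπ₀K : π₀ (Kset d m)ᶜ = 0 :=
    le_antisymm (le_trans (measure_mono (Set.compl_subset_compl.2 (Ublk_subset_Kset 0)))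
      (pi0_Ublk_compl_null hν hπ₀m hνsupp h𝒳m h𝒳b 0).le) zero_le
  have hπAK : ∀ n, piA ν π₀ n (Kset d m)ᶜ = 0 := fun n =>
    le_antisymm (le_trans (measure_mono (Set.compl_subset_compl.2 (Ublk_subset_Kset n)))
      (piA_Ublk_compl_null hν n).le) zero_le
  have hInt0 : Integrable f π₀ := integrable_of_compl_null hπ₀K hf
  have hIntA : ∀ n, Integrable f (piA ν π₀ n) := fun n =>
    integrable_of_compl_null (hπAK n) hf
  rw [Metric.tendsto_atTop]
  intro η hη
  obtain ⟨δ, hδ, hδ'⟩ := Metric.uniformContinuousOn_iff.1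
    (hKc.uniformContinuousOn_of_continuous hf.continuousOn) (η/3) (by linarith)
  have h2 : Tendsto (fun n : ℕ => Real.sqrt d * ((2:ℝ)^n)⁻¹) atTop (𝓝 0) := by
    have := tendsto_inv_atTop_zero.comp
      (tendsto_pow_atTop_atTop_of_one_lt (one_lt_two (α := ℝ)))
    simpa using tendsto_const_nhds.mul this
  obtain ⟨N, hN⟩ := (h2.eventually_lt_const hδ).exists
  refine ⟨N, fun n hn => ?_⟩
  have hδn : Real.sqrt d * ((2:ℝ)^n)⁻¹ < δ := by
    refine lt_of_le_of_lt ?_ hN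
    have h2n : (2:ℝ)^N ≤ 2^n := pow_le_pow_right₀ one_le_two hn
    have := inv_anti₀ (by positivity : (0:ℝ) < 2^N) h2n
    nlinarith [Real.sqrt_nonneg (d:ℝ)]
  -- block decomposition of both integrals
  rw [Real.dist_eq, integral_eq_sum_blocks n (piA_Ublk_compl_null hν n) (hIntA n),
    integral_eq_sum_blocks n (pi0_Ublk_compl_null hν hπ₀m hνsupp h𝒳m h𝒳b n) hInt0,
    ← Finset.sum_sub_distrib]
  -- estimate each term
  have hterm : ∀ κ ∈ Sm d m n,
      |(∫ x in Ablk n κ, f x ∂(piA ν π₀ n)) - ∫ x in Ablk n κ, f x ∂π₀|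
      ≤ (2*η/3) * (π₀ (Ablk n κ)).toReal := by
    intro κ hκ
    set ξ : Fin m → Euc d := fun j => ctr n (κ j) with hξ
    have hξA : ξ ∈ Ablk n κ := ctrm_mem_Ablk n κ
    have hξK : ξ ∈ Kset d m := Ablk_subset_Kset hκ hξA
    have hest : ∀ (μ : Measure (Fin m → Euc d)), IsProbabilityMeasure μ → Integrable f μ →
        μ (Ablk n κ) = π₀ (Ablk n κ) →
        |(∫ x in Ablk n κ, f x ∂μ) - f ξ * (π₀ (Ablk n κ)).toReal|
          ≤ (η/3) * (π₀ (Ablk n κ)).toReal := by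
      intro μ hμp hμint hμA
      have hsub : (∫ x in Ablk n κ, f x ∂μ) - f ξ * (π₀ (Ablk n κ)).toReal
          = ∫ x in Ablk n κ, (f x - f ξ) ∂μ := by
        rw [integral_sub hμint.integrableOn (integrable_const _), setIntegral_const,
          measureReal_def, hμA, smul_eq_mul, mul_comm]
      rw [hsub, ← Real.norm_eq_abs]
      have := norm_setIntegral_le_of_norm_le_const (μ := μ) (s := Ablk n κ)
        (C := η/3) (f := fun x => f x - f ξ) (measure_lt_top μ _) ?_
      · rw [measureReal_def, hμA] at this
        exact this
      · intro x hx
        have hxK : x ∈ Kset d m := Ablk_subset_Kset hκ hx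
        have hdist : dist x ξ < δ := by
          refine lt_of_le_of_lt ?_ hδn
          refine (dist_pi_le_iff (by positivity)).2 fun j => ?_
          exact dist_le_of_idx_eq ((mem_Ablk.1 hx j).trans (mem_Ablk.1 hξA j).symm)
        rw [Real.norm_eq_abs, ← Real.dist_eq]
        exact (hδ' x hxK ξ hξK hdist).le
    have h1 := hest (piA ν π₀ n) (by infer_instance) (hIntA n) (piA_Ablk hν hπ₀m hκ)
    have h0 := hest π₀ hπ₀p hInt0 rfl
    calc |(∫ x in Ablk n κ, f x ∂(piA ν π₀ n)) - ∫ x in Ablk n κ, f x ∂π₀|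
        ≤ |(∫ x in Ablk n κ, f x ∂(piA ν π₀ n)) - f ξ * (π₀ (Ablk n κ)).toReal|
          + |(∫ x in Ablk n κ, f x ∂π₀) - f ξ * (π₀ (Ablk n κ)).toReal| := by
          rw [abs_sub_comm (∫ x in Ablk n κ, f x ∂π₀) _] ; exact abs_sub_le _ _ _
      _ ≤ (η/3) * (π₀ (Ablk n κ)).toReal + (η/3) * (π₀ (Ablk n κ)).toReal := add_le_add h1 h0
      _ = (2*η/3) * (π₀ (Ablk n κ)).toReal := by ring
  calc |∑ κ ∈ Sm d m n, ((∫ x in Ablk n κ, f x ∂(piA ν π₀ n)) - ∫ x in Ablk n κ, f x ∂π₀)|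
      ≤ ∑ κ ∈ Sm d m n,
        |(∫ x in Ablk n κ, f x ∂(piA ν π₀ n)) - ∫ x in Ablk n κ, f x ∂π₀| :=
        Finset.abs_sum_le_sum_abs _ _
    _ ≤ ∑ κ ∈ Sm d m n, (2*η/3) * (π₀ (Ablk n κ)).toReal :=
        Finset.sum_le_sum hterm
    _ = (2*η/3) * (∑ κ ∈ Sm d m n, π₀ (Ablk n κ)).toReal := by
        rw [ENNReal.toReal_sum (fun κ _ => (measure_lt_top π₀ _).ne), Finset.mul_sum]
    _ < η := by
        rw [pi0_sum_Sm hν hπ₀p hπ₀m hνsupp h𝒳m h𝒳b n]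
        norm_num
        linarith

end Measures
end BA
end


/-- **Γ-limsup inequality via block approximation.** For every
`π₀ ∈ Π(ν₁,…,ν_m)` there is a family `(π ε)_{ε>0} ⊆ Π(ν₁,…,ν_m)` with
`π ε ≪ ν₁⊗⋯⊗ν_m`, converging weakly to `π₀` as `ε → 0⁺`, such that
`limsup_{ε→0⁺} [∫ c_α dπ_ε + ε · KL(π_ε ‖ ν₁⊗⋯⊗ν_m)] ≤ ∫ c_α dπ₀`. -/
theorem gamma_limsup {d m : ℕ} (hm : 0 < m)
    (𝒳 : Set (Euc d)) (h𝒳c : IsCompact 𝒳) (h𝒳b : ∀ x ∈ 𝒳, ∀ i, |x i| ≤ 1)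
    (h𝒳int : (interior 𝒳).Nonempty)
    (ν : Fin m → Measure (Euc d)) (hν : ∀ j, IsProbabilityMeasure (ν j))
    (hνsupp : ∀ j, ν j 𝒳 = 1)
    (α : Fin m → ℝ) (hα : ∀ i, 0 ≤ α i) (hα1 : ∑ i, α i = 1)
    (π₀ : Measure (Fin m → Euc d)) (hπ₀ : IsCoupling ν π₀) :
    ∃ π : ℝ → Measure (Fin m → Euc d),
      (∀ ε : ℝ, 0 < ε → IsCoupling ν (π ε) ∧ (π ε) ≪ Measure.pi ν) ∧
      (∀ f : BoundedContinuousFunction (Fin m → Euc d) ℝ,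
        Tendsto (fun ε => ∫ x, f x ∂(π ε)) (𝓝[>] (0 : ℝ)) (𝓝 (∫ x, f x ∂π₀))) ∧
      limsup (fun ε => entCost α ε ν (π ε)) (𝓝[>] (0 : ℝ)) ≤
        ∫⁻ x, ENNReal.ofReal (costα α x) ∂π₀ := by
  classical
  obtain ⟨hπ₀p, hπ₀m⟩ := hπ₀
  haveI := hπ₀p
  have h𝒳m : MeasurableSet 𝒳 := h𝒳c.isClosed.measurableSet
  haveI hprob : ∀ n, IsProbabilityMeasure (BA.piA ν π₀ n) :=
    fun n => BA.piA_isProbability hν hπ₀p hπ₀m hνsupp h𝒳m h𝒳b n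
  -- KL values and the scale function
  set Kl : ℕ → ℝ≥0∞ := fun n => KLdiv (BA.piA ν π₀ n) (Measure.pi ν) with hKl
  have hKlt : ∀ n, Kl n ≠ ⊤ := fun n => BA.KLdiv_piA_ne_top hν hπ₀p hπ₀m hνsupp h𝒳m h𝒳b n
  set g : ℕ → ℝ := fun n => (∑ k ∈ Finset.range (n+1), (Kl k).toReal) + n + 1 with hg
  have hg1 : ∀ n : ℕ, (n:ℝ) + 1 ≤ g n := fun n => by
    have h0 : (0:ℝ) ≤ ∑ k ∈ Finset.range (n+1), (Kl k).toReal :=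
      Finset.sum_nonneg fun _ _ => ENNReal.toReal_nonneg
    simp only [hg]; linarith
  have hgK : ∀ n, (Kl n).toReal ≤ g n := fun n => by
    have h1 : (Kl n).toReal ≤ ∑ k ∈ Finset.range (n+1), (Kl k).toReal :=
      Finset.single_le_sum (fun _ _ => ENNReal.toReal_nonneg) (Finset.self_mem_range_succ n)
    have h2 : (0:ℝ) ≤ n := Nat.cast_nonneg n
    simp only [hg]; linarith
  have hgpos : ∀ n, 0 < g n := fun n => lt_of_lt_of_le (by positivity) (hg1 n)
  set P : ℝ → ℕ → Prop := fun ε n => g n * g n ≤ ε⁻¹ with hP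
  set N : ℝ → ℕ := fun ε => Nat.findGreatest (P ε) ⌈ε⁻¹⌉₊ with hN
  have hPmono : ∀ {ε : ℝ} {A : ℕ}, 0 < ε → ε < (g A * g A)⁻¹ → P ε A := by
    intro ε A hε0 hlt
    have hsq : (0:ℝ) < g A * g A := by positivity
    have h1 : g A * g A * ε < 1 := by
      have := mul_lt_mul_of_pos_left hlt hsq
      rwa [mul_inv_cancel₀ (ne_of_gt hsq)] at this
    show g A * g A ≤ ε⁻¹
    rw [inv_eq_one_div, le_div_iff₀ hε0]
    linarith
  have hNge : ∀ (A : ℕ), ∀ᶠ ε in 𝓝[>] (0:ℝ), A ≤ N ε := by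
    intro A
    have hc : (0:ℝ) < (g A * g A)⁻¹ := by positivity
    filter_upwards [Ioo_mem_nhdsGT_of_mem (Set.left_mem_Ico.2 hc)] with ε hε
    have hPA : P ε A := hPmono hε.1 hε.2
    have hAc : (A:ℝ) ≤ ε⁻¹ := by
      refine le_trans ?_ hPA
      have := hg1 A
      nlinarith [hgpos A]
    have hAb : A ≤ ⌈ε⁻¹⌉₊ := by
      have := Nat.le_ceil (ε⁻¹)
      exact_mod_cast Nat.cast_le.1 (le_trans (by exact_mod_cast hAc) this)
    exact Nat.le_findGreatest hAb hPA
  have hNtends : Tendsto N (𝓝[>] (0:ℝ)) atTop := tendsto_atTop.2 hNge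
  -- carrier / integrability facts
  have hπ₀K : π₀ (BA.Kset d m)ᶜ = 0 :=
    le_antisymm (le_trans (measure_mono (Set.compl_subset_compl.2 (BA.Ublk_subset_Kset 0)))
      (BA.pi0_Ublk_compl_null hν hπ₀m hνsupp h𝒳m h𝒳b 0).le) zero_le
  have hπAK : ∀ n, BA.piA ν π₀ n (BA.Kset d m)ᶜ = 0 := fun n =>
    le_antisymm (le_trans (measure_mono (Set.compl_subset_compl.2 (BA.Ublk_subset_Kset n)))
      (BA.piA_Ublk_compl_null hν n).le) zero_le
  have hcostc : Continuous (costα (d := d) α) := by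
    refine continuous_finset_sum _ fun i _ => continuous_finset_sum _ fun j _ => ?_
    split_ifs
    · exact ((((continuous_apply i).const_smul (α i)).sub
        ((continuous_apply j).const_smul (α j))).norm.pow 2)
    · exact continuous_const
  have hcostpos : ∀ x : Fin m → Euc d, 0 ≤ costα α x := fun x =>
    Finset.sum_nonneg fun i _ => Finset.sum_nonneg fun j _ => by
      split_ifs
      · positivity
      · exact le_refl 0
  -- the three obligations
  refine ⟨fun ε => BA.piA ν π₀ (N ε), ?_, ?_, ?_⟩
  · intro ε _
    exact ⟨⟨hprob (N ε), fun j => BA.piA_map hν hπ₀m hνsupp h𝒳m h𝒳b (N ε) j⟩,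
      BA.piA_ac (N ε)⟩
  · intro f
    exact (BA.tendsto_integral_piA hν hπ₀p hπ₀m hνsupp h𝒳m h𝒳b f.continuous).comp hNtends
  · -- limsup inequality, via an actual limit
    have hIntA : ∀ n, Integrable (costα α) (BA.piA ν π₀ n) := fun n =>
      BA.integrable_of_compl_null (hπAK n) hcostc
    have hInt0 : Integrable (costα α) π₀ := BA.integrable_of_compl_null hπ₀K hcostc
    have hlinA : ∀ n, ∫⁻ x, ENNReal.ofReal (costα α x) ∂(BA.piA ν π₀ n)
        = ENNReal.ofReal (∫ x, costα α x ∂(BA.piA ν π₀ n)) := fun n =>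
      (ofReal_integral_eq_lintegral_ofReal (hIntA n)
        (Filter.Eventually.of_forall hcostpos)).symm
    have hlin0 : ∫⁻ x, ENNReal.ofReal (costα α x) ∂π₀
        = ENNReal.ofReal (∫ x, costα α x ∂π₀) :=
      (ofReal_integral_eq_lintegral_ofReal hInt0
        (Filter.Eventually.of_forall hcostpos)).symm
    -- cost term converges
    have hcost_tendsto : Tendsto
        (fun ε => ∫⁻ x, ENNReal.ofReal (costα α x) ∂(BA.piA ν π₀ (N ε)))
        (𝓝[>] (0:ℝ)) (𝓝 (∫⁻ x, ENNReal.ofReal (costα α x) ∂π₀)) := by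
      have h1 : Tendsto (fun n => ∫⁻ x, ENNReal.ofReal (costα α x) ∂(BA.piA ν π₀ n))
          atTop (𝓝 (∫⁻ x, ENNReal.ofReal (costα α x) ∂π₀)) := by
        simp only [hlinA, hlin0]
        exact (ENNReal.continuous_ofReal.tendsto _).comp
          (BA.tendsto_integral_piA hν hπ₀p hπ₀m hνsupp h𝒳m h𝒳b hcostc)
      exact h1.comp hNtends
    -- entropy term converges to zero
    have hKl_le : ∀ n, Kl n ≤ ENNReal.ofReal (g n) := fun n => by
      rw [← ENNReal.ofReal_toReal (hKlt n)]
      exact ENNReal.ofReal_le_ofReal (hgK n)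
    have hent_bound : ∀ᶠ ε in 𝓝[>] (0:ℝ),
        ENNReal.ofReal ε * Kl (N ε) ≤ ENNReal.ofReal (Real.sqrt ε) := by
      have hc : (0:ℝ) < (g 0 * g 0)⁻¹ := by positivity
      filter_upwards [Ioo_mem_nhdsGT_of_mem (Set.left_mem_Ico.2 hc)] with ε hε
      have hε0 : 0 < ε := hε.1
      have hP0 : P ε 0 := hPmono hε0 hε.2
      have hPN : P ε (N ε) := Nat.findGreatest_spec (Nat.zero_le _) hP0
      have hsq1 : g (N ε) ≤ Real.sqrt ε⁻¹ := by
        rw [show g (N ε) = Real.sqrt (g (N ε) ^ 2) from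
          (Real.sqrt_sq (hgpos (N ε)).le).symm]
        refine Real.sqrt_le_sqrt ?_
        calc g (N ε) ^ 2 = g (N ε) * g (N ε) := sq (g (N ε)) ▸ by ring
          _ ≤ ε⁻¹ := hPN
      have hsqε : (0:ℝ) < Real.sqrt ε := Real.sqrt_pos.2 hε0
      have h2 : ε * g (N ε) ≤ Real.sqrt ε := by
        have h3 : ε * g (N ε) ≤ ε * Real.sqrt ε⁻¹ :=
          mul_le_mul_of_nonneg_left hsq1 hε0.le
        have h4 : ε * Real.sqrt ε⁻¹ = Real.sqrt ε := by
          rw [Real.sqrt_inv]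
          rw [show ε = Real.sqrt ε * Real.sqrt ε from (Real.mul_self_sqrt hε0.le).symm]
          field_simp
          rw [Real.sqrt_sq hsqε.le]
        rw [h4] at h3
        exact h3
      calc ENNReal.ofReal ε * Kl (N ε)
          ≤ ENNReal.ofReal ε * ENNReal.ofReal (g (N ε)) :=
            mul_le_mul_right (hKl_le (N ε)) _
        _ = ENNReal.ofReal (ε * g (N ε)) := (ENNReal.ofReal_mul hε0.le).symm
        _ ≤ ENNReal.ofReal (Real.sqrt ε) := ENNReal.ofReal_le_ofReal h2
    have hsqrt_tendsto : Tendsto (fun ε : ℝ => ENNReal.ofReal (Real.sqrt ε))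
        (𝓝[>] (0:ℝ)) (𝓝 0) := by
      have h1 : Tendsto Real.sqrt (𝓝[>] (0:ℝ)) (𝓝 0) := by
        have := (Real.continuous_sqrt.tendsto 0).mono_left
          (nhdsWithin_le_nhds (s := Set.Ioi (0:ℝ)))
        simpa using this
      have := (ENNReal.continuous_ofReal.tendsto 0).comp h1
      simpa using (show Tendsto (fun ε : ℝ => ENNReal.ofReal (Real.sqrt ε)) (𝓝[>] (0:ℝ)) (𝓝 (ENNReal.ofReal 0)) from this)
    have hent_tendsto : Tendsto (fun ε => ENNReal.ofReal ε * Kl (N ε))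
        (𝓝[>] (0:ℝ)) (𝓝 0) := by
      refine tendsto_of_tendsto_of_tendsto_of_le_of_le' tendsto_const_nhds hsqrt_tendsto
        (Filter.Eventually.of_forall fun ε => zero_le) hent_bound
    have hsum : Tendsto (fun ε => entCost α ε ν (BA.piA ν π₀ (N ε)))
        (𝓝[>] (0:ℝ)) (𝓝 (∫⁻ x, ENNReal.ofReal (costα α x) ∂π₀)) := by
      have := hcost_tendsto.add hent_tendsto
      simpa only [entCost, add_zero] using this
    rw [hsum.limsup_eq]
end

section
/- Cluster points of entropic optimal couplings are multimarginal optimal transport solutions: For each ε > 0 let π*_ε be a minimizer of π ↦ ∫ c_α dπ + ε · KL(π ‖ ν_1⊗⋯⊗ν_m) over Π(ν_1,…,ν_m). If ε_k → 0⁺ and π*_{ε_k} converges weakly to some probability measure π_0 on 𝒳^m, then π_0 ∈ Π(ν_1,…,ν_m) and π_0 minimizes π ↦ ∫ c_α dπ over Π(ν_1,…,ν_m). -/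
open MeasureTheory ProbabilityTheory Filter Topology
open scoped ENNReal NNReal

noncomputable section

lemma costα_nonneg {m d : ℕ} (α : Fin m → ℝ) (x : Fin m → Euc d) : 0 ≤ costα α x :=
  Finset.sum_nonneg fun _ _ => Finset.sum_nonneg fun _ _ => by
    split <;> positivity

lemma costα_continuous {m d : ℕ} (α : Fin m → ℝ) : Continuous (costα (m := m) (d := d) α) := by
  unfold costα
  refine continuous_finset_sum _ fun i _ => continuous_finset_sum _ fun j _ => ?_
  by_cases h : i < j
  · simp only [if_pos h]
    exact (((continuous_apply i).const_smul (α i)).sub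
      ((continuous_apply j).const_smul (α j))).norm.pow 2
  · simp only [if_neg h]; exact continuous_const

lemma norm_le_sqrt {d : ℕ} {y : Euc d} (h : ∀ t, |y t| ≤ 1) : ‖y‖ ≤ Real.sqrt d := by
  rw [EuclideanSpace.norm_eq]
  refine Real.sqrt_le_sqrt ?_
  calc ∑ t, ‖y t‖ ^ 2 ≤ ∑ _t : Fin d, (1:ℝ) := by
        refine Finset.sum_le_sum fun t _ => ?_
        have := h t
        have : ‖y t‖ ≤ 1 := by rwa [Real.norm_eq_abs]
        nlinarith [norm_nonneg (y t)]
    _ = d := by simp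

def Mbd (m d : ℕ) : ℝ := (m:ℝ)^2 * (4*d)

lemma Mbd_nonneg (m d : ℕ) : 0 ≤ Mbd m d := by unfold Mbd; positivity

lemma costα_le {m d : ℕ} {α : Fin m → ℝ} (hα : ∀ i, 0 ≤ α i) (hα1 : ∑ i, α i = 1)
    {x : Fin m → Euc d} (hx : ∀ i, ∀ t, |x i t| ≤ 1) : costα α x ≤ Mbd m d := by
  have hα' : ∀ i, α i ≤ 1 := by
    intro i
    calc α i ≤ ∑ i, α i := Finset.single_le_sum (fun i _ => hα i) (Finset.mem_univ i)
      _ = 1 := hα1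
  have key : ∀ i j : Fin m, (if i < j then ‖α i • x i - α j • x j‖ ^ 2 else 0) ≤ 4 * d := by
    intro i j
    have hd : (0:ℝ) ≤ 4 * d := by positivity
    split
    · have hni : ‖x i‖ ≤ Real.sqrt d := norm_le_sqrt (hx i)
      have hnj : ‖x j‖ ≤ Real.sqrt d := norm_le_sqrt (hx j)
      have h1 : ‖α i • x i - α j • x j‖ ≤ 2 * Real.sqrt d := by
        calc ‖α i • x i - α j • x j‖ ≤ ‖α i • x i‖ + ‖α j • x j‖ := norm_sub_le _ _
          _ = |α i| * ‖x i‖ + |α j| * ‖x j‖ := by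
              rw [norm_smul, norm_smul, Real.norm_eq_abs, Real.norm_eq_abs]
          _ ≤ 2 * Real.sqrt d := by
              have hs : (0:ℝ) ≤ Real.sqrt d := Real.sqrt_nonneg _
              have hi1 : |α i| ≤ 1 := abs_le.2 ⟨by linarith [hα i], hα' i⟩
              have hj1 : |α j| ≤ 1 := abs_le.2 ⟨by linarith [hα j], hα' j⟩
              have h2 := abs_nonneg (α i); have h3 := abs_nonneg (α j)
              nlinarith
      have hsq : (2 * Real.sqrt d)^2 = 4 * (d:ℝ) := by
        rw [mul_pow, Real.sq_sqrt (by positivity : (0:ℝ) ≤ (d:ℝ))]; ring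
      calc ‖α i • x i - α j • x j‖ ^ 2 ≤ (2 * Real.sqrt d)^2 :=
            pow_le_pow_left₀ (norm_nonneg _) h1 2
        _ = 4 * (d:ℝ) := hsq
    · exact hd
  unfold costα
  calc (∑ i : Fin m, ∑ j : Fin m, if i < j then ‖α i • x i - α j • x j‖ ^ 2 else 0)
      ≤ ∑ _i : Fin m, ∑ _j : Fin m, (4 * (d:ℝ)) :=
        Finset.sum_le_sum fun i _ => Finset.sum_le_sum fun j _ => key i j
    _ = Mbd m d := by simp [Mbd, Finset.sum_const]; ring


-- Chunk D: truncation and concentration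
section D
open Set
variable {m d : ℕ}

/-- The truncated cost as a bounded continuous function. -/
def gtr (α : Fin m → ℝ) : BoundedContinuousFunction (Fin m → Euc d) ℝ :=
  BoundedContinuousFunction.mkOfBound
    ⟨fun x => min (costα α x) (Mbd m d), (costα_continuous α).min continuous_const⟩
    (Mbd m d)
    (fun x y => by
      have h1 : 0 ≤ min (costα α x) (Mbd m d) := le_min (costα_nonneg α x) (Mbd_nonneg m d)
      have h2 : 0 ≤ min (costα α y) (Mbd m d) := le_min (costα_nonneg α y) (Mbd_nonneg m d)
      have h3 : min (costα α x) (Mbd m d) ≤ Mbd m d := min_le_right _ _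
      have h4 : min (costα α y) (Mbd m d) ≤ Mbd m d := min_le_right _ _
      rw [Real.dist_eq, abs_sub_le_iff]
      constructor <;> simp only [ContinuousMap.coe_mk] <;> linarith)

lemma gtr_apply (α : Fin m → ℝ) (x : Fin m → Euc d) :
    gtr α x = min (costα α x) (Mbd m d) := rfl

lemma gtr_nonneg (α : Fin m → ℝ) (x : Fin m → Euc d) : 0 ≤ gtr α x :=
  le_min (costα_nonneg α x) (Mbd_nonneg m d)

lemma concentrated (𝒳 : Set (Euc d)) (h𝒳m : MeasurableSet 𝒳)
    {ν : Fin m → Measure (Euc d)} (hν : ∀ j, IsProbabilityMeasure (ν j))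
    (hνsupp : ∀ j, ν j 𝒳 = 1) {π : Measure (Fin m → Euc d)}
    (hπ : IsProbabilityMeasure π) (hmarg : ∀ j, π.map (fun x => x j) = ν j) :
    π {x : Fin m → Euc d | ∀ j, x j ∈ 𝒳}ᶜ = 0 := by
  have hc : {x : Fin m → Euc d | ∀ j, x j ∈ 𝒳}ᶜ = ⋃ j, (fun x => x j) ⁻¹' 𝒳ᶜ := by
    ext x; simp [Set.mem_iUnion, not_forall]
  rw [hc]
  refine measure_iUnion_null fun j => ?_
  rw [← Measure.map_apply (measurable_pi_apply j) h𝒳m.compl, hmarg j]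
  haveI := hν j
  rw [measure_compl h𝒳m (measure_ne_top _ _), hνsupp j, measure_univ]
  simp

lemma lintegral_cost_eq_int_gtr (α : Fin m → ℝ) (hα : ∀ i, 0 ≤ α i) (hα1 : ∑ i, α i = 1)
    (𝒳 : Set (Euc d)) (h𝒳b : ∀ x ∈ 𝒳, ∀ i, |x i| ≤ 1)
    {π : Measure (Fin m → Euc d)} [IsProbabilityMeasure π]
    (hπK : π {x : Fin m → Euc d | ∀ j, x j ∈ 𝒳}ᶜ = 0) :
    ∫⁻ x, ENNReal.ofReal (costα α x) ∂π = ENNReal.ofReal (∫ x, gtr α x ∂π) := by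
  have hae : ∀ᵐ x ∂π, x ∈ {x : Fin m → Euc d | ∀ j, x j ∈ 𝒳} := by
    rw [ae_iff]
    exact hπK
  have haeq : ∀ᵐ x ∂π, ENNReal.ofReal (costα α x) = ENNReal.ofReal (gtr α x) := by
    filter_upwards [hae] with x hx
    have hb : costα α x ≤ Mbd m d := costα_le hα hα1 (fun i t => h𝒳b (x i) (hx i) t)
    rw [gtr_apply, min_eq_left hb]
  rw [lintegral_congr_ae haeq]
  exact (ofReal_integral_eq_lintegral_ofReal ((gtr α).integrable π)
      (Eventually.of_forall (gtr_nonneg α))).symm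

lemma lintegral_cost_le (α : Fin m → ℝ) (hα : ∀ i, 0 ≤ α i) (hα1 : ∑ i, α i = 1)
    (𝒳 : Set (Euc d)) (h𝒳b : ∀ x ∈ 𝒳, ∀ i, |x i| ≤ 1)
    {π : Measure (Fin m → Euc d)} [IsProbabilityMeasure π]
    (hπK : π {x : Fin m → Euc d | ∀ j, x j ∈ 𝒳}ᶜ = 0) :
    ∫⁻ x, ENNReal.ofReal (costα α x) ∂π ≤ ENNReal.ofReal (Mbd m d) := by
  rw [lintegral_cost_eq_int_gtr α hα hα1 𝒳 h𝒳b hπK]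
  refine ENNReal.ofReal_le_ofReal ?_
  calc ∫ x, gtr α x ∂π ≤ ∫ _x, Mbd m d ∂π := by
        refine integral_mono ((gtr α).integrable π) (integrable_const _) ?_
        intro x; exact min_le_right _ _
    _ = Mbd m d := by simp
end D





def idxZ (n : ℕ) (r : ℝ) : ℤ := ⌊(r + 1) * n / 2⌋

def idxF (n : ℕ) (hn : 0 < n) (r : ℝ) : Fin n := ⟨min (idxZ n r).toNat (n - 1), by omega⟩

lemma measurable_idxF {n : ℕ} (hn : 0 < n) : Measurable (idxF n hn) := by
  have h1 : Measurable (idxZ n) :=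
    (((measurable_id.add_const (1:ℝ)).mul_const (n:ℝ)).div_const 2).floor
  exact (measurable_of_countable (fun v : ℤ => (⟨min v.toNat (n-1), by omega⟩ : Fin n))).comp h1

lemma idxF_close {n : ℕ} (hn : 0 < n) {r r' : ℝ} (hr : r ∈ Set.Icc (-1:ℝ) 1)
    (hr' : r' ∈ Set.Icc (-1:ℝ) 1) (h : idxF n hn r = idxF n hn r') : |r - r'| ≤ 2 / n := by
  set a := (r + 1) * n / 2 with ha
  set a' := (r' + 1) * n / 2 with ha'
  have hn' : (0:ℝ) < n := by exact_mod_cast hn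
  have hbound : ∀ s : ℝ, s ∈ Set.Icc (-1:ℝ) 1 → 0 ≤ (s + 1) * n / 2 ∧ (s + 1) * n / 2 ≤ n := by
    intro s hs
    obtain ⟨h1, h2⟩ := hs
    constructor
    · have : (0:ℝ) ≤ s + 1 := by linarith
      positivity
    · rw [div_le_iff₀ (by norm_num : (0:ℝ) < 2)]
      nlinarith
  obtain ⟨ha0, haN⟩ := hbound r hr
  obtain ⟨ha0', haN'⟩ := hbound r' hr'
  have hfl0 : 0 ≤ ⌊a⌋ := Int.floor_nonneg.mpr ha0
  have hfl0' : 0 ≤ ⌊a'⌋ := Int.floor_nonneg.mpr ha0'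
  have hkey : |a - a'| ≤ 1 := by
    have hmin : min (⌊a⌋.toNat) (n-1) = min (⌊a'⌋.toNat) (n-1) := congrArg Fin.val h
    rcases le_or_gt (n-1 : ℕ) (⌊a⌋.toNat) with h1 | h1
    · -- both clamped at n-1
      have h2 : (n-1 : ℕ) ≤ ⌊a'⌋.toNat := by omega
      have e1 : ((n:ℝ) - 1) ≤ a := by
        have : ((n:ℤ) - 1) ≤ ⌊a⌋ := by omega
        calc ((n:ℝ) - 1) = ((n - 1 : ℤ) : ℝ) := by push_cast; ring
          _ ≤ (⌊a⌋ : ℝ) := by exact_mod_cast this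
          _ ≤ a := Int.floor_le a
      have e2 : ((n:ℝ) - 1) ≤ a' := by
        have : ((n:ℤ) - 1) ≤ ⌊a'⌋ := by omega
        calc ((n:ℝ) - 1) = ((n - 1 : ℤ) : ℝ) := by push_cast; ring
          _ ≤ (⌊a'⌋ : ℝ) := by exact_mod_cast this
          _ ≤ a' := Int.floor_le a'
      rw [abs_sub_le_iff]; constructor <;> linarith
    · rcases le_or_gt (n-1 : ℕ) (⌊a'⌋.toNat) with h2 | h2
      · omega
      · -- no clamping: floors equal
        have h3 : ⌊a⌋.toNat = ⌊a'⌋.toNat := by omega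
        have h4 : ⌊a⌋ = ⌊a'⌋ := by omega
        have l1 : (⌊a⌋ : ℝ) ≤ a := Int.floor_le a
        have l2 : a < ⌊a⌋ + 1 := Int.lt_floor_add_one a
        have l3 : (⌊a⌋ : ℝ) ≤ a' := by rw [h4]; exact Int.floor_le a'
        have l4 : a' < ⌊a⌋ + 1 := by rw [h4]; exact Int.lt_floor_add_one a'
        rw [abs_sub_le_iff]; constructor <;> linarith
  have hdiff : a - a' = (r - r') * n / 2 := by rw [ha, ha']; ring
  have : |r - r'| * (n / 2) ≤ 1 := by
    calc |r - r'| * (n / 2) = |(r - r') * n / 2| := by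
          rw [abs_div, abs_mul, abs_of_nonneg hn'.le, abs_two]
          ring
      _ = |a - a'| := by rw [hdiff]
      _ ≤ 1 := hkey
  calc |r - r'| = (|r - r'| * (n / 2)) * (2 / n) := by field_simp
    _ ≤ 1 * (2 / n) := by
        have : (0:ℝ) ≤ 2 / n := by positivity
        nlinarith [abs_nonneg (r - r'), this]
    _ = 2 / n := by ring



open Set in
lemma map_eval_pi {ι : Type*} [Fintype ι] {X : ι → Type*} [∀ i, MeasurableSpace (X i)]
    (μ : ∀ i, Measure (X i)) [∀ i, IsProbabilityMeasure (μ i)] (j : ι) :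
    (Measure.pi μ).map (fun x => x j) = μ j := by
  classical
  ext s hs
  rw [Measure.map_apply (measurable_pi_apply j) hs]
  have hpre : (fun x : ∀ i, X i => x j) ⁻¹' s
      = Set.pi univ (Function.update (fun i => (univ : Set (X i))) j s) :=
    Set.eval_preimage
  rw [hpre, Measure.pi_pi]
  rw [Finset.prod_eq_single j (fun i _ hij => by simp [Function.update_of_ne hij])
    (fun h => absurd (Finset.mem_univ j) h)]
  simp

open Set in
lemma pi_smul {ι : Type*} [Fintype ι] {X : ι → Type*} [∀ i, MeasurableSpace (X i)]
    (ms : ∀ i, Measure (X i)) [∀ i, IsFiniteMeasure (ms i)] (c : ι → ℝ≥0∞) (hc : ∀ i, c i ≠ ∞) :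
    Measure.pi (fun i => c i • ms i) = (∏ i, c i) • Measure.pi ms := by
  haveI : ∀ i, SigmaFinite (c i • ms i) := fun i => by
    haveI : IsFiniteMeasure (c i • ms i) := ⟨by
      rw [Measure.smul_apply, smul_eq_mul]
      exact ENNReal.mul_lt_top (hc i).lt_top (measure_lt_top _ _)⟩
    infer_instance
  refine Measure.pi_eq fun s hs => ?_
  rw [Measure.smul_apply, Measure.pi_pi, smul_eq_mul, ← Finset.prod_mul_distrib]
  simp [Measure.smul_apply, smul_eq_mul]

open Set in
lemma pi_restrict {ι : Type*} [Fintype ι] {X : ι → Type*} [∀ i, MeasurableSpace (X i)]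
    (ms : ∀ i, Measure (X i)) [∀ i, IsFiniteMeasure (ms i)] (C : ∀ i, Set (X i))
    (hC : ∀ i, MeasurableSet (C i)) :
    Measure.pi (fun i => (ms i).restrict (C i)) = (Measure.pi ms).restrict (Set.pi univ C) := by
  refine Measure.pi_eq fun s hs => ?_
  rw [Measure.restrict_apply (MeasurableSet.univ_pi hs), ← Set.pi_inter_distrib, Measure.pi_pi]
  simp_rw [Measure.restrict_apply (hs _)]

lemma measure_ext_bcf {X : Type*} [MeasurableSpace X] [MetricSpace X] [BorelSpace X]
    {μ ν : Measure X} [IsFiniteMeasure μ] [IsFiniteMeasure ν]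
    (h : ∀ f : BoundedContinuousFunction X ℝ, ∫ x, f x ∂μ = ∫ x, f x ∂ν) : μ = ν := by
  apply ext_of_forall_lintegral_eq_of_IsFiniteMeasure
  intro f
  obtain ⟨C, hC⟩ := f.bounded
  let fR : BoundedContinuousFunction X ℝ :=
    ⟨⟨fun x => (f x : ℝ), NNReal.continuous_coe.comp f.continuous⟩, ⟨C, fun x y => by
      have := hC x y
      rwa [NNReal.dist_eq] at this⟩⟩
  have h1 : ∫⁻ x, (f x : ℝ≥0∞) ∂μ = ENNReal.ofReal (∫ x, fR x ∂μ) :=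
    lintegral_coe_eq_integral (fun x => f x) (fR.integrable μ)
  have h2 : ∫⁻ x, (f x : ℝ≥0∞) ∂ν = ENNReal.ofReal (∫ x, fR x ∂ν) :=
    lintegral_coe_eq_integral (fun x => f x) (fR.integrable ν)
  rw [h1, h2, h fR]


section Block
open Set

lemma block_approx {d m : ℕ} (hm : 0 < m)
    (𝒳 : Set (Euc d)) (h𝒳m : MeasurableSet 𝒳) (h𝒳b : ∀ x ∈ 𝒳, ∀ i, |x i| ≤ 1)
    (ν : Fin m → Measure (Euc d)) (hν : ∀ j, IsProbabilityMeasure (ν j))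
    (hνsupp : ∀ j, ν j 𝒳 = 1)
    (α : Fin m → ℝ) (hα : ∀ i, 0 ≤ α i) (hα1 : ∑ i, α i = 1)
    (π : Measure (Fin m → Euc d)) (hπ : IsCoupling ν π)
    {η : ℝ} (hη : 0 < η) :
    ∃ π' : Measure (Fin m → Euc d), IsCoupling ν π' ∧ KLdiv π' (Measure.pi ν) ≠ ⊤ ∧
      ∫⁻ x, ENNReal.ofReal (costα α x) ∂π'
        ≤ ∫⁻ x, ENNReal.ofReal (costα α x) ∂π + ENNReal.ofReal η := by
  classical
  haveI : ∀ j, IsProbabilityMeasure (ν j) := hν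
  obtain ⟨hπprob, hπmarg⟩ := hπ
  haveI := hπprob
  -- the compact box
  set B1 : Set (Euc d) := {y : Euc d | ∀ t, |y t| ≤ 1} with hB1def
  have hB1closed : IsClosed B1 := by
    have : B1 = ⋂ t, (fun y : Euc d => y t) ⁻¹' (Icc (-1:ℝ) 1) := by
      ext y; simp [hB1def, abs_le]
    rw [this]
    exact isClosed_iInter fun t =>
      IsClosed.preimage (by fun_prop) isClosed_Icc
  have hB1compact : IsCompact B1 := by
    refine Metric.isCompact_of_isClosed_isBounded hB1closed ?_
    refine (Metric.isBounded_iff_subset_closedBall 0).2 ⟨Real.sqrt d, fun y hy => ?_⟩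
    simp only [Metric.mem_closedBall, dist_zero_right]
    exact norm_le_sqrt hy
  set Kbox : Set (Fin m → Euc d) := Set.pi univ (fun _ => B1) with hKboxdef
  have hKboxcompact : IsCompact Kbox := isCompact_univ_pi fun _ => hB1compact
  -- uniform continuity on the box
  have hUC := hKboxcompact.uniformContinuousOn_of_continuous
    (costα_continuous (d := d) α).continuousOn
  rw [Metric.uniformContinuousOn_iff] at hUC
  obtain ⟨δ, hδpos, hδ⟩ := hUC (η/2) (by linarith)
  -- choose n
  obtain ⟨n, hngt⟩ := exists_nat_gt (max 0 (2 * Real.sqrt d / δ))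
  have hn0 : 0 < n := by
    have h0 : (0:ℝ) < n := lt_of_le_of_lt (le_max_left 0 _) hngt
    exact_mod_cast h0
  have hnpos : (0:ℝ) < n := by exact_mod_cast hn0
  have hstep : Real.sqrt d * (2 / n) < δ := by
    have h1 : 2 * Real.sqrt d / δ < n := (le_max_right _ _).trans_lt hngt
    rw [div_lt_iff₀ hδpos] at h1
    have h2 : Real.sqrt d * (2 / n) = 2 * Real.sqrt d / n := by ring
    rw [h2, div_lt_iff₀ hnpos]
    linarith
  -- the partition machinery
  set T : Euc d → (Fin d → Fin n) := fun y t => idxF n hn0 (y t) with hTdef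
  have hTmeas : Measurable T :=
    measurable_pi_lambda _ fun t => (measurable_idxF hn0).comp (by fun_prop : Continuous fun c : Euc d => c t).measurable
  set G : (Fin m → Euc d) → (Fin m → Fin d → Fin n) := fun x i => T (x i) with hGdef
  have hGmeas : Measurable G :=
    measurable_pi_lambda _ fun i => hTmeas.comp (measurable_pi_apply i)
  set C : (Fin d → Fin n) → Set (Euc d) := fun w => T ⁻¹' {w} with hCdef
  have hCmeas : ∀ w, MeasurableSet (C w) := fun w => hTmeas (measurableSet_singleton w)
  set Bl : (Fin m → Fin d → Fin n) → Set (Fin m → Euc d) := fun z => G ⁻¹' {z} with hBldef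
  have hBlmeas : ∀ z, MeasurableSet (Bl z) := fun z => hGmeas (measurableSet_singleton z)
  have hBl_eq : ∀ z, Bl z = Set.pi univ (fun i => C (z i)) := by
    intro z; ext x
    simp only [hBldef, mem_preimage, mem_singleton_iff, funext_iff, Set.mem_pi, mem_univ,
      forall_true_left, hCdef, hGdef]
  have hBl_disj : Pairwise (Function.onFun Disjoint Bl) := by
    intro z z' hzz
    simp only [Function.onFun, hBldef]
    refine Set.disjoint_left.2 fun x hx hx' => hzz ?_
    simp only [mem_preimage, mem_singleton_iff] at hx hx'
    rw [← hx, ← hx']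
  have hBl_cover : ⋃ z, Bl z = univ := by
    ext x; simp [hBldef]
  -- close points in the same block
  have hblock_close : ∀ x ξ : Fin m → Euc d, x ∈ Kbox → ξ ∈ Kbox → G x = G ξ →
      |costα α x - costα α ξ| < η/2 := by
    intro x ξ hx hξ hG
    have hdist : dist x ξ < δ := by
      rw [dist_pi_lt_iff hδpos]
      intro i
      have hdi : dist (x i) (ξ i) ≤ Real.sqrt d * (2 / n) := by
        rw [EuclideanSpace.dist_eq]
        have hle : (∑ t, dist (x i t) (ξ i t) ^ 2) ≤ (d : ℝ) * (2/n)^2 := by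
          calc (∑ t, dist (x i t) (ξ i t) ^ 2) ≤ ∑ _t : Fin d, (2/n : ℝ)^2 := by
                refine Finset.sum_le_sum fun t _ => ?_
                have hidx : idxF n hn0 (x i t) = idxF n hn0 (ξ i t) := by
                  have := congrFun (congrFun hG i) t
                  exact this
                have hxt : x i t ∈ Icc (-1:ℝ) 1 := abs_le.1 (hx i (mem_univ i) t)
                have hξt : ξ i t ∈ Icc (-1:ℝ) 1 := abs_le.1 (hξ i (mem_univ i) t)
                have := idxF_close hn0 hxt hξt hidx
                rw [Real.dist_eq]
                have h0 : (0:ℝ) ≤ 2/n := by positivity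
                nlinarith [abs_nonneg (x i t - ξ i t)]
            _ = (d : ℝ) * (2/n)^2 := by simp [Finset.sum_const]
        calc Real.sqrt (∑ t, dist (x i t) (ξ i t) ^ 2) ≤ Real.sqrt ((d:ℝ) * (2/n)^2) :=
              Real.sqrt_le_sqrt hle
          _ = Real.sqrt d * (2/n) := by
              rw [Real.sqrt_mul (by positivity), Real.sqrt_sq (by positivity)]
      exact hdi.trans_lt hstep
    have := hδ x hx ξ hξ hdist
    rwa [Real.dist_eq] at this
  -- XX : support set
  set XX : Set (Fin m → Euc d) := {x : Fin m → Euc d | ∀ j, x j ∈ 𝒳} with hXXdef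
  have hXXm : MeasurableSet XX := by
    have : XX = ⋂ j, (fun x : Fin m → Euc d => x j) ⁻¹' 𝒳 := by ext x; simp [hXXdef]
    rw [this]
    exact MeasurableSet.iInter fun j => h𝒳m.preimage (measurable_pi_apply j)
  have hXXsub : XX ⊆ Kbox := by
    intro x hx i _ t
    exact h𝒳b (x i) (hx i) t
  have hπXX : π XXᶜ = 0 := concentrated 𝒳 h𝒳m hν hνsupp hπprob hπmarg
  -- key marginal comparison
  have hmargC : ∀ z j, π (Bl z) ≤ ν j (C (z j)) := by
    intro z j
    have hsub : Bl z ⊆ (fun x : Fin m → Euc d => x j) ⁻¹' (C (z j)) := by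
      intro x hx
      simp only [hBldef, mem_preimage, mem_singleton_iff] at hx
      simp only [mem_preimage]
      rw [← hx]
      simp [hCdef, hGdef]
    calc π (Bl z) ≤ π ((fun x : Fin m → Euc d => x j) ⁻¹' (C (z j))) := measure_mono hsub
      _ = (π.map (fun x => x j)) (C (z j)) :=
          (Measure.map_apply (measurable_pi_apply j) (hCmeas (z j))).symm
      _ = ν j (C (z j)) := by rw [hπmarg j]
  -- the conditional measures
  set μp : (Fin m → Fin d → Fin n) → (j : Fin m) → Measure (Euc d) :=
    fun z j => (ν j (C (z j)))⁻¹ • (ν j).restrict (C (z j)) with hμpdef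
  have hμprob : ∀ z, π (Bl z) ≠ 0 → ∀ j, IsProbabilityMeasure (μp z j) := by
    intro z hz j
    have hCne : ν j (C (z j)) ≠ 0 := fun h0 => hz (le_antisymm (h0 ▸ hmargC z j) zero_le)
    constructor
    rw [hμpdef]
    simp only [Measure.smul_apply, smul_eq_mul, Measure.restrict_apply MeasurableSet.univ,
      univ_inter]
    exact ENNReal.inv_mul_cancel hCne (measure_ne_top _ _)
  set κ : (Fin m → Fin d → Fin n) → ℝ≥0∞ :=
    fun z => π (Bl z) * ∏ j, (ν j (C (z j)))⁻¹ with hκdef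
  set π' : Measure (Fin m → Euc d) :=
    Measure.sum (fun z => π (Bl z) • Measure.pi (μp z)) with hπ'def

  -- total mass of blocks
  have hsum_Bl : ∑ z, π (Bl z) = 1 := by
    have h1 : π (⋃ z, Bl z) = ∑' z, π (Bl z) := measure_iUnion hBl_disj hBlmeas
    rw [hBl_cover, measure_univ, tsum_fintype] at h1
    exact h1.symm
  have hCne : ∀ z, π (Bl z) ≠ 0 → ∀ j, ν j (C (z j)) ≠ 0 := fun z hz j h0 =>
    hz (le_antisymm (h0 ▸ hmargC z j) zero_le)
  -- pi measures concentrated on their blocks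
  have hPae : ∀ z, π (Bl z) ≠ 0 → ∀ᵐ x ∂(Measure.pi (μp z)), x ∈ Bl z ∩ XX := by
    intro z hz
    haveI := hμprob z hz
    have hcoord : ∀ j, ∀ᵐ y ∂(μp z j), y ∈ C (z j) ∩ 𝒳 := by
      intro j
      rw [ae_iff]
      have hset : {y : Euc d | ¬ y ∈ C (z j) ∩ 𝒳} = (C (z j) ∩ 𝒳)ᶜ := rfl
      rw [hset, hμpdef]
      simp only [Measure.smul_apply, smul_eq_mul,
        Measure.restrict_apply ((hCmeas (z j)).inter h𝒳m).compl]
      have hsub : (C (z j) ∩ 𝒳)ᶜ ∩ C (z j) ⊆ 𝒳ᶜ := fun y hy hyX => hy.1 ⟨hy.2, hyX⟩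
      have hXc : ν j 𝒳ᶜ = 0 := by
        haveI := hν j
        rw [measure_compl h𝒳m (measure_ne_top _ _), hνsupp j, measure_univ]
        simp
      rw [measure_mono_null hsub hXc, mul_zero]
    have hall : ∀ᵐ x ∂(Measure.pi (μp z)), ∀ j, x j ∈ C (z j) ∩ 𝒳 :=
      Filter.eventually_all.2 fun j => Measure.tendsto_eval_ae_ae.eventually (hcoord j)
    filter_upwards [hall] with x hx
    refine ⟨?_, fun j => (hx j).2⟩
    rw [hBl_eq]
    exact fun i _ => (hx i).1
  -- marginals of π'
  have hmarg' : ∀ j, π'.map (fun x => x j) = ν j := by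
    intro j
    ext s hs
    rw [Measure.map_apply (measurable_pi_apply j) hs, hπ'def,
      Measure.sum_apply _ (hs.preimage (measurable_pi_apply j)), tsum_fintype]
    have hterm : ∀ z, (π (Bl z) • Measure.pi (μp z)) ((fun x : Fin m → Euc d => x j) ⁻¹' s)
        = π (Bl z) * ((ν j (C (z j)))⁻¹ * ν j (s ∩ C (z j))) := by
      intro z
      rcases eq_or_ne (π (Bl z)) 0 with hz | hz
      · rw [Measure.smul_apply, smul_eq_mul, hz, zero_mul, zero_mul]
      · haveI := hμprob z hz
        rw [Measure.smul_apply, smul_eq_mul,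
          ← Measure.map_apply (measurable_pi_apply j) hs, map_eval_pi (μp z) j]
        simp only [hμpdef, Measure.smul_apply, smul_eq_mul, Measure.restrict_apply hs]
    simp_rw [hterm]
    rw [← Finset.sum_fiberwise_of_maps_to (g := fun z : Fin m → Fin d → Fin n => z j)
      (fun z _ => Finset.mem_univ (z j))
      (fun z => π (Bl z) * ((ν j (C (z j)))⁻¹ * ν j (s ∩ C (z j))))]
    have hfib : ∀ w, (∑ z ∈ Finset.univ.filter (fun z : Fin m → Fin d → Fin n => z j = w),
        π (Bl z) * ((ν j (C (z j)))⁻¹ * ν j (s ∩ C (z j)))) = ν j (s ∩ C w) := by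
      intro w
      have h1 : ∀ z ∈ Finset.univ.filter (fun z : Fin m → Fin d → Fin n => z j = w),
          π (Bl z) * ((ν j (C (z j)))⁻¹ * ν j (s ∩ C (z j)))
          = π (Bl z) * ((ν j (C w))⁻¹ * ν j (s ∩ C w)) := by
        intro z hzf
        rw [Finset.mem_filter] at hzf
        rw [hzf.2]
      rw [Finset.sum_congr rfl h1, ← Finset.sum_mul]
      have hun : (fun x : Fin m → Euc d => x j) ⁻¹' (C w)
          = ⋃ z ∈ Finset.univ.filter (fun z : Fin m → Fin d → Fin n => z j = w), Bl z := by
        ext x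
        simp only [mem_preimage, Set.mem_iUnion, Finset.mem_filter, Finset.mem_univ, true_and,
          hBldef, mem_singleton_iff]
        constructor
        · intro hx
          refine ⟨G x, ?_, rfl⟩
          simpa [hGdef, hCdef] using hx
        · rintro ⟨z, hzj, rfl⟩
          simp only [hCdef, mem_preimage, mem_singleton_iff, hGdef]
          exact hzj ▸ rfl
      have h2 : (∑ z ∈ Finset.univ.filter (fun z : Fin m → Fin d → Fin n => z j = w),
          π (Bl z)) = ν j (C w) := by
        calc (∑ z ∈ Finset.univ.filter (fun z : Fin m → Fin d → Fin n => z j = w), π (Bl z))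
            = π (⋃ z ∈ Finset.univ.filter (fun z : Fin m → Fin d → Fin n => z j = w), Bl z) :=
              (measure_biUnion_finset (fun z _ z' _ hne => hBl_disj hne)
                (fun z _ => hBlmeas z)).symm
          _ = π ((fun x : Fin m → Euc d => x j) ⁻¹' (C w)) := by rw [hun]
          _ = (π.map (fun x : Fin m → Euc d => x j)) (C w) :=
              (Measure.map_apply (measurable_pi_apply j) (hCmeas w)).symm
          _ = ν j (C w) := by rw [hπmarg j]
      rw [h2]
      rcases eq_or_ne (ν j (C w)) 0 with h0 | h0
      · have hsub0 : ν j (s ∩ C w) = 0 := measure_mono_null inter_subset_right h0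
        rw [h0, hsub0]
        simp
      · haveI := hν j
        rw [← mul_assoc, ENNReal.mul_inv_cancel h0 (measure_ne_top _ _), one_mul]
    rw [Finset.sum_congr rfl (fun w _ => hfib w)]
    have hC_disj : Pairwise (Function.onFun Disjoint C) := by
      intro w w' hww
      simp only [Function.onFun, hCdef]
      refine Set.disjoint_left.2 fun y hy hy' => hww ?_
      simp only [mem_preimage, mem_singleton_iff] at hy hy'
      rw [← hy, ← hy']
    have hcover' : ⋃ w, (s ∩ C w) = s := by
      ext x
      simp only [Set.mem_iUnion, mem_inter_iff, hCdef, mem_preimage, mem_singleton_iff]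
      constructor
      · rintro ⟨w, hw, _⟩; exact hw
      · intro hx; exact ⟨T x, hx, rfl⟩
    calc (∑ w, ν j (s ∩ C w)) = ∑' w, ν j (s ∩ C w) := (tsum_fintype _).symm
      _ = ν j (⋃ w, s ∩ C w) :=
          (measure_iUnion (fun w w' hww => ((hC_disj hww).mono inter_subset_right
            inter_subset_right)) (fun w => hs.inter (hCmeas w))).symm
      _ = ν j s := by rw [hcover']
  -- π' is a probability measure
  haveI hπ'prob : IsProbabilityMeasure π' := by
    constructor
    let j0 : Fin m := ⟨0, hm⟩
    calc π' univ = (π'.map (fun x : Fin m → Euc d => x j0)) univ := by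
          rw [Measure.map_apply (measurable_pi_apply j0) MeasurableSet.univ, preimage_univ]
      _ = 1 := by rw [hmarg' j0]; haveI := hν j0; exact measure_univ
  -- cost bound
  have hcost : ∫⁻ x, ENNReal.ofReal (costα α x) ∂π'
      ≤ ∫⁻ x, ENNReal.ofReal (costα α x) ∂π + ENNReal.ofReal η := by
    rw [hπ'def, lintegral_sum_measure]
    have hzbd : ∀ z, ∫⁻ x, ENNReal.ofReal (costα α x) ∂(π (Bl z) • Measure.pi (μp z))
        ≤ ∫⁻ x in Bl z, ENNReal.ofReal (costα α x) ∂π + π (Bl z) * ENNReal.ofReal η := by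
      intro z
      rw [lintegral_smul_measure, smul_eq_mul]
      rcases eq_or_ne (π (Bl z)) 0 with hz | hz
      · rw [hz, zero_mul, zero_mul, add_zero]; exact zero_le
      haveI := hμprob z hz
      have hBlXXne : π (Bl z ∩ XX) ≠ 0 := by
        intro h0
        apply hz
        have hle : π (Bl z) ≤ π (Bl z ∩ XX) + π XXᶜ := by
          calc π (Bl z) ≤ π ((Bl z ∩ XX) ∪ XXᶜ) := measure_mono (fun x hx => by
                by_cases hxX : x ∈ XX
                · exact Or.inl ⟨hx, hxX⟩
                · exact Or.inr hxX)
            _ ≤ π (Bl z ∩ XX) + π XXᶜ := measure_union_le _ _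
        rw [h0, hπXX, add_zero] at hle
        exact le_antisymm hle zero_le
      obtain ⟨ξ, hξBl, hξXX⟩ := nonempty_of_measure_ne_zero hBlXXne
      have hξKb : ξ ∈ Kbox := hXXsub hξXX
      have hGξ : G ξ = z := hξBl
      have hub : ∫⁻ x, ENNReal.ofReal (costα α x) ∂(Measure.pi (μp z))
          ≤ ENNReal.ofReal (costα α ξ + η/2) := by
        calc ∫⁻ x, ENNReal.ofReal (costα α x) ∂(Measure.pi (μp z))
            ≤ ∫⁻ _x, ENNReal.ofReal (costα α ξ + η/2) ∂(Measure.pi (μp z)) := by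
              refine lintegral_mono_ae ?_
              filter_upwards [hPae z hz] with x hx
              refine ENNReal.ofReal_le_ofReal ?_
              have hxK : x ∈ Kbox := hXXsub hx.2
              have hGx : G x = z := hx.1
              have hclose := hblock_close x ξ hxK hξKb (hGx.trans hGξ.symm)
              rw [abs_sub_lt_iff] at hclose
              linarith [hclose.1]
          _ = ENNReal.ofReal (costα α ξ + η/2) := by
              rw [lintegral_const, measure_univ, mul_one]
      have hlb : ENNReal.ofReal (costα α ξ - η/2) * π (Bl z)
          ≤ ∫⁻ x in Bl z, ENNReal.ofReal (costα α x) ∂π := by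
        have h1 : ∀ᵐ x ∂(π.restrict (Bl z)), x ∈ Bl z := ae_restrict_mem (hBlmeas z)
        have h2 : ∀ᵐ x ∂(π.restrict (Bl z)), x ∈ XX := by
          rw [ae_iff]
          exact measure_mono_null (fun x hx => hx) (le_antisymm
            ((Measure.restrict_apply_le _ _).trans hπXX.le) zero_le)
        have hae2 : ∀ᵐ x ∂(π.restrict (Bl z)),
            ENNReal.ofReal (costα α ξ - η/2) ≤ ENNReal.ofReal (costα α x) := by
          filter_upwards [h1, h2] with x hx1 hx2
          refine ENNReal.ofReal_le_ofReal ?_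
          have hxK : x ∈ Kbox := hXXsub hx2
          have hGx : G x = z := hx1
          have hclose := hblock_close x ξ hxK hξKb (hGx.trans hGξ.symm)
          rw [abs_sub_lt_iff] at hclose
          linarith [hclose.2]
        calc ENNReal.ofReal (costα α ξ - η/2) * π (Bl z)
            = ∫⁻ _x in Bl z, ENNReal.ofReal (costα α ξ - η/2) ∂π := (setLIntegral_const _ _).symm
          _ ≤ ∫⁻ x in Bl z, ENNReal.ofReal (costα α x) ∂π := lintegral_mono_ae hae2
      calc π (Bl z) * ∫⁻ x, ENNReal.ofReal (costα α x) ∂(Measure.pi (μp z))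
          ≤ π (Bl z) * ENNReal.ofReal (costα α ξ + η/2) := mul_le_mul_right hub _
        _ ≤ π (Bl z) * (ENNReal.ofReal (costα α ξ - η/2) + ENNReal.ofReal η) := by
            refine mul_le_mul_right ?_ _
            have heq : costα α ξ + η/2 = (costα α ξ - η/2) + η := by ring
            rw [heq]
            exact ENNReal.ofReal_add_le
        _ = ENNReal.ofReal (costα α ξ - η/2) * π (Bl z) + π (Bl z) * ENNReal.ofReal η := by
            rw [mul_add, mul_comm (π (Bl z)) (ENNReal.ofReal (costα α ξ - η/2))]
        _ ≤ ∫⁻ x in Bl z, ENNReal.ofReal (costα α x) ∂π + π (Bl z) * ENNReal.ofReal η :=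
            add_le_add_left hlb _
    have hsplit : ∫⁻ x, ENNReal.ofReal (costα α x) ∂π
        = ∑ z, ∫⁻ x in Bl z, ENNReal.ofReal (costα α x) ∂π := by
      rw [← tsum_fintype (L := SummationFilter.unconditional _), ← lintegral_iUnion hBlmeas hBl_disj, hBl_cover, Measure.restrict_univ]
    calc (∑' z, ∫⁻ x, ENNReal.ofReal (costα α x) ∂(π (Bl z) • Measure.pi (μp z)))
        ≤ ∑' z, (∫⁻ x in Bl z, ENNReal.ofReal (costα α x) ∂π + π (Bl z) * ENNReal.ofReal η) :=
          ENNReal.tsum_le_tsum hzbd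
      _ = ∑ z, (∫⁻ x in Bl z, ENNReal.ofReal (costα α x) ∂π + π (Bl z) * ENNReal.ofReal η) :=
          tsum_fintype _
      _ = (∑ z, ∫⁻ x in Bl z, ENNReal.ofReal (costα α x) ∂π)
            + ∑ z, π (Bl z) * ENNReal.ofReal η := Finset.sum_add_distrib
      _ = ∫⁻ x, ENNReal.ofReal (costα α x) ∂π + ENNReal.ofReal η := by
          rw [← hsplit, ← Finset.sum_mul, hsum_Bl, one_mul]
  -- KL divergence is finite
  set Q : Measure (Fin m → Euc d) := Measure.pi ν with hQdef
  set ρ : (Fin m → Euc d) → ℝ≥0∞ := fun x => κ (G x) with hρdef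
  have hρmeas : Measurable ρ := (measurable_of_countable κ).comp hGmeas
  have hwd : π' = Q.withDensity ρ := by
    ext s hs
    rw [withDensity_apply _ hs, hπ'def, Measure.sum_apply _ hs]
    have hrhs : ∫⁻ x in s, ρ x ∂Q = ∑' z, κ z * Q (s ∩ Bl z) := by
      have hsu : ⋃ z, (s ∩ Bl z) = s := by
        ext x
        simp only [Set.mem_iUnion, mem_inter_iff, hBldef, mem_preimage, mem_singleton_iff]
        constructor
        · rintro ⟨z, hz, _⟩; exact hz
        · intro hx; exact ⟨G x, hx, rfl⟩
      calc ∫⁻ x in s, ρ x ∂Q = ∫⁻ x in ⋃ z, (s ∩ Bl z), ρ x ∂Q := by rw [hsu]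
        _ = ∑' z, ∫⁻ x in s ∩ Bl z, ρ x ∂Q :=
            lintegral_iUnion (fun z => hs.inter (hBlmeas z))
              (fun z z' hzz => (hBl_disj hzz).mono inter_subset_right inter_subset_right) _
        _ = ∑' z, κ z * Q (s ∩ Bl z) := by
            refine tsum_congr fun z => ?_
            rw [setLIntegral_congr_fun (hs.inter (hBlmeas z))
              (fun x hx => ?_), setLIntegral_const]
            show ρ x = κ z
            rw [hρdef]
            simp only []
            congr 1
            exact hx.2
      -- done
    rw [hrhs]
    refine tsum_congr fun z => ?_
    rw [Measure.smul_apply, smul_eq_mul]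
    rcases eq_or_ne (π (Bl z)) 0 with hz | hz
    · rw [hz, zero_mul, hκdef]
      simp only [hz, zero_mul]
    · have hcj : ∀ j, (ν j (C (z j)))⁻¹ ≠ ∞ := fun j => by
        simp only [ne_eq, ENNReal.inv_eq_top]
        exact hCne z hz j
      haveI hfin : ∀ i, IsFiniteMeasure (ν i) := fun i => by haveI := hν i; infer_instance
      haveI : ∀ j, IsFiniteMeasure ((ν j).restrict (C (z j))) := fun j => by
        infer_instance
      have hpi_eq : Measure.pi (μp z)
          = (∏ j, (ν j (C (z j)))⁻¹) • Q.restrict (Bl z) := by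
        rw [hμpdef]
        rw [pi_smul (fun j => (ν j).restrict (C (z j))) _ hcj]
        rw [pi_restrict ν (fun j => C (z j)) (fun j => hCmeas (z j))]
        rw [hBl_eq z, hQdef]
      rw [hpi_eq, Measure.smul_apply, smul_eq_mul, Measure.restrict_apply hs, hκdef, mul_assoc]
  have hac : π' ≪ Q := by
    rw [hwd]
    exact withDensity_absolutelyContinuous Q ρ
  haveI : ∀ i, SigmaFinite (ν i) := fun i => by haveI := hν i; infer_instance
  haveI : SigmaFinite Q := by
    rw [hQdef]
    infer_instance
  have hrn : π'.rnDeriv Q =ᵐ[Q] ρ := by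
    rw [hwd]
    exact Measure.rnDeriv_withDensity Q hρmeas
  haveI hne : Nonempty (Fin m → Fin d → Fin n) := ⟨fun _ _ => ⟨0, hn0⟩⟩
  set Λ : ℝ := Finset.univ.sup' Finset.univ_nonempty (fun z => |Real.log ((κ z).toReal)|)
    with hΛdef
  have hllr_meas : Measurable (fun x => Real.log ((π'.rnDeriv Q x).toReal)) :=
    Real.measurable_log.comp (Measure.measurable_rnDeriv π' Q).ennreal_toReal
  have hbd : ∀ᵐ x ∂π', |Real.log ((π'.rnDeriv Q x).toReal)| ≤ Λ := by
    filter_upwards [hac.ae_eq hrn] with x hx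
    rw [hx, hρdef]
    exact Finset.le_sup' (fun z => |Real.log ((κ z).toReal)|) (Finset.mem_univ (G x))
  have hint : Integrable (fun x => Real.log ((π'.rnDeriv Q x).toReal)) π' := by
    refine Integrable.mono' (integrable_const Λ) hllr_meas.aestronglyMeasurable ?_
    filter_upwards [hbd] with x hx
    rwa [Real.norm_eq_abs]
  have hKL : KLdiv π' Q ≠ ⊤ := by
    rw [KLdiv, if_pos ⟨hac, hint⟩]
    exact ENNReal.ofReal_ne_top
  exact ⟨π', ⟨hπ'prob, hmarg'⟩, hKL, hcost⟩


end Block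

end

/-- **Cluster points of entropic optimal couplings are MOT solutions.** If for each
`ε > 0`, `π* ε` minimizes `π ↦ ∫ c_α dπ + ε · KL(π ‖ ν₁⊗⋯⊗ν_m)` over
`Π(ν₁,…,ν_m)`, `εk k → 0⁺` and `π* (εk k)` converges weakly to a probability measure
`π₀`, then `π₀ ∈ Π(ν₁,…,ν_m)` and `π₀` minimizes `π ↦ ∫ c_α dπ` over `Π(ν₁,…,ν_m)`. -/
theorem cluster_points_minimize {d m : ℕ} (hm : 0 < m)
    (𝒳 : Set (Euc d)) (h𝒳c : IsCompact 𝒳) (h𝒳b : ∀ x ∈ 𝒳, ∀ i, |x i| ≤ 1)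
    (h𝒳int : (interior 𝒳).Nonempty)
    (ν : Fin m → Measure (Euc d)) (hν : ∀ j, IsProbabilityMeasure (ν j))
    (hνsupp : ∀ j, ν j 𝒳 = 1)
    (α : Fin m → ℝ) (hα : ∀ i, 0 ≤ α i) (hα1 : ∑ i, α i = 1)
    (πopt : ℝ → Measure (Fin m → Euc d))
    (hopt : ∀ ε : ℝ, 0 < ε → IsCoupling ν (πopt ε) ∧
      ∀ π, IsCoupling ν π → entCost α ε ν (πopt ε) ≤ entCost α ε ν π)
    (εk : ℕ → ℝ) (hεk : ∀ k, 0 < εk k) (hεk0 : Tendsto εk atTop (𝓝 0))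
    (π₀ : Measure (Fin m → Euc d)) (hπ₀ : IsProbabilityMeasure π₀)
    (hconv : ∀ f : BoundedContinuousFunction (Fin m → Euc d) ℝ,
      Tendsto (fun k => ∫ x, f x ∂(πopt (εk k))) atTop (𝓝 (∫ x, f x ∂π₀))) :
    IsCoupling ν π₀ ∧
    ∀ π, IsCoupling ν π →
      ∫⁻ x, ENNReal.ofReal (costα α x) ∂π₀ ≤ ∫⁻ x, ENNReal.ofReal (costα α x) ∂π := by
  classical
  haveI : ∀ j, IsProbabilityMeasure (ν j) := hν
  haveI := hπ₀
  have h𝒳m : MeasurableSet 𝒳 := h𝒳c.isClosed.measurableSet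
  -- Step 1: marginals of π₀
  have hπ₀marg : ∀ j, π₀.map (fun x : Fin m → Euc d => x j) = ν j := by
    intro j
    haveI : IsProbabilityMeasure (π₀.map (fun x : Fin m → Euc d => x j)) :=
      Measure.isProbabilityMeasure_map (measurable_pi_apply j).aemeasurable
    refine measure_ext_bcf fun f => ?_
    set F : BoundedContinuousFunction (Fin m → Euc d) ℝ :=
      f.compContinuous ⟨fun x : Fin m → Euc d => x j, continuous_apply j⟩ with hFdef
    have hFeq : ∀ (μ : Measure (Fin m → Euc d)),
        ∫ x, F x ∂μ = ∫ x, f x ∂(μ.map (fun x : Fin m → Euc d => x j)) := fun μ =>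
      (integral_map (measurable_pi_apply j).aemeasurable
        f.continuous.measurable.aestronglyMeasurable).symm
    have h1 : Tendsto (fun k => ∫ x, F x ∂(πopt (εk k))) atTop (𝓝 (∫ x, F x ∂π₀)) := hconv F
    have h2 : ∀ k, ∫ x, F x ∂(πopt (εk k)) = ∫ y, f y ∂(ν j) := by
      intro k
      rw [hFeq, ((hopt (εk k) (hεk k)).1).2 j]
    rw [← hFeq]
    refine tendsto_nhds_unique h1 ?_
    rw [show (fun k => ∫ x, F x ∂(πopt (εk k))) = fun _ => ∫ y, f y ∂(ν j) from funext h2]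
    exact tendsto_const_nhds
  have hcoupπ₀ : IsCoupling ν π₀ := ⟨hπ₀, hπ₀marg⟩
  refine ⟨hcoupπ₀, ?_⟩
  intro π hπc
  have hKcompl : ∀ {μ : Measure (Fin m → Euc d)}, IsCoupling ν μ →
      μ {x : Fin m → Euc d | ∀ j, x j ∈ 𝒳}ᶜ = 0 := fun hμ =>
    concentrated 𝒳 h𝒳m hν hνsupp hμ.1 hμ.2
  -- Step 2: convergence of unbounded cost integrals
  have htend : Tendsto (fun k => ∫⁻ x, ENNReal.ofReal (costα α x) ∂(πopt (εk k))) atTop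
      (𝓝 (∫⁻ x, ENNReal.ofReal (costα α x) ∂π₀)) := by
    have h1 := hconv (gtr α)
    have h2 := (ENNReal.continuous_ofReal.tendsto _).comp h1
    have h3 : ∀ k, ENNReal.ofReal (∫ x, gtr α x ∂(πopt (εk k)))
        = ∫⁻ x, ENNReal.ofReal (costα α x) ∂(πopt (εk k)) := by
      intro k
      haveI := ((hopt (εk k) (hεk k)).1).1
      exact (lintegral_cost_eq_int_gtr α hα hα1 𝒳 h𝒳b (hKcompl (hopt (εk k) (hεk k)).1)).symm
    have h4 : ENNReal.ofReal (∫ x, gtr α x ∂π₀) = ∫⁻ x, ENNReal.ofReal (costα α x) ∂π₀ :=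
      (lintegral_cost_eq_int_gtr α hα hα1 𝒳 h𝒳b (hKcompl hcoupπ₀)).symm
    rw [← h4]
    exact h2.congr h3
  -- Step 3: compare with approximations of π
  refine ENNReal.le_of_forall_pos_le_add fun ε hε _hπfin => ?_
  obtain ⟨π', hπ'c, hKL, hcost⟩ := block_approx hm 𝒳 h𝒳m h𝒳b ν hν hνsupp α hα hα1 π hπc
    (show (0:ℝ) < (ε : ℝ) from by exact_mod_cast hε)
  have hchain : ∀ k, ∫⁻ x, ENNReal.ofReal (costα α x) ∂(πopt (εk k))
      ≤ (∫⁻ x, ENNReal.ofReal (costα α x) ∂π')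
        + ENNReal.ofReal (εk k) * KLdiv π' (Measure.pi ν) := by
    intro k
    obtain ⟨hcoup, hmin⟩ := hopt (εk k) (hεk k)
    calc ∫⁻ x, ENNReal.ofReal (costα α x) ∂(πopt (εk k))
        ≤ entCost α (εk k) ν (πopt (εk k)) := le_self_add
      _ ≤ entCost α (εk k) ν π' := hmin π' hπ'c
      _ = _ := rfl
  have hofreal0 : Tendsto (fun k => ENNReal.ofReal (εk k)) atTop (𝓝 0) := by
    have := (ENNReal.continuous_ofReal.tendsto 0).comp hεk0
    rw [ENNReal.ofReal_zero] at this; exact this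
  have hlim2 : Tendsto (fun k => (∫⁻ x, ENNReal.ofReal (costα α x) ∂π')
      + ENNReal.ofReal (εk k) * KLdiv π' (Measure.pi ν)) atTop
      (𝓝 ((∫⁻ x, ENNReal.ofReal (costα α x) ∂π') + 0)) := by
    refine Tendsto.const_add _ ?_
    simpa using (ENNReal.Tendsto.mul_const hofreal0 (Or.inr hKL))
  have hle := le_of_tendsto_of_tendsto' htend hlim2 hchain
  rw [add_zero] at hle
  calc ∫⁻ x, ENNReal.ofReal (costα α x) ∂π₀ ≤ ∫⁻ x, ENNReal.ofReal (costα α x) ∂π' := hle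
    _ ≤ ∫⁻ x, ENNReal.ofReal (costα α x) ∂π + ENNReal.ofReal (ε:ℝ) := hcost
    _ = ∫⁻ x, ENNReal.ofReal (costα α x) ∂π + ε := by rw [ENNReal.ofReal_coe_nnreal]
end

section
/- Concentration of empirical multimarginal distributions: Let φ ∈ L^∞(ν_1⊗⋯⊗ν_m) satisfy ∫ φ d(ν_1⊗⋯⊗ν_m) = 0. Then for every t > 0, with probability at least 1 − 2e^{−t} (over the random samples), | ∫ φ d(ν̂_1^N ⊗ ⋯ ⊗ ν̂_m^N) | ≤ ‖φ‖_∞ √(2t/N). -/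
open MeasureTheory ProbabilityTheory Filter Topology
open scoped ENNReal NNReal

/-- The empirical measure `N⁻¹ ∑_{k} δ_{x k}` of a point cloud `x`. -/
noncomputable def empMeas {E : Type*} [MeasurableSpace E] {N : ℕ} (x : Fin N → E) :
    Measure E :=
  (N : ℝ≥0∞)⁻¹ • ∑ k : Fin N, Measure.dirac (x k)

section IndepHelpers

variable {Ω : Type*} [MeasurableSpace Ω] {μ : Measure Ω}

lemma indep_precomp {ι ι' E : Type*} [MeasurableSpace E] {f : ι → Ω → E}
    (h : iIndepFun f μ) (g : ι' → ι) (hg : Function.Injective g) :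
    iIndepFun (fun i => f (g i)) μ := by
  classical
  rw [iIndepFun_iff_measure_inter_preimage_eq_mul] at h ⊢
  intro S sets H
  set sets' : ι → Set E := fun p => if hp : ∃ i, g i = p then sets hp.choose else Set.univ
    with hsets'
  have hix : ∀ i, sets' (g i) = sets i := by
    intro i
    have hp : ∃ i', g i' = g i := ⟨i, rfl⟩
    simp only [hsets', dif_pos hp]
    rw [hg hp.choose_spec]
  have h1 : (⋂ i ∈ S, f (g i) ⁻¹' sets i) = ⋂ p ∈ S.image g, f p ⁻¹' sets' p := by
    ext ω
    simp only [Set.mem_iInter, Finset.mem_image]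
    constructor
    · rintro hw p ⟨i, hi, rfl⟩
      rw [hix]; exact hw i hi
    · intro hw i hi
      have := hw (g i) ⟨i, hi, rfl⟩
      rwa [hix] at this
  have h2 := h (S.image g) (sets := sets') ?_
  · rw [h1, h2, Finset.prod_image (fun a _ b _ hab => hg hab)]
    exact Finset.prod_congr rfl fun i _ => by rw [hix]
  · intro p hp
    obtain ⟨i, hi, rfl⟩ := Finset.mem_image.mp hp
    rw [hix]; exact H i hi

lemma joint_law {ι E : Type*} [Fintype ι] [MeasurableSpace E] [IsProbabilityMeasure μ]
    {f : ι → Ω → E} (hm : ∀ i, Measurable (f i))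
    (h : iIndepFun f μ) :
    μ.map (fun ω i => f i ω) = Measure.pi (fun i => μ.map (f i)) := by
  haveI : ∀ i, IsProbabilityMeasure (μ.map (f i)) :=
    fun i => Measure.isProbabilityMeasure_map (hm i).aemeasurable
  refine (Measure.pi_eq fun s hs => ?_).symm
  rw [Measure.map_apply (measurable_pi_lambda _ hm) (MeasurableSet.univ_pi hs)]
  have hpre : (fun ω i => f i ω) ⁻¹' Set.pi Set.univ s = ⋂ i, f i ⁻¹' s i := by
    ext ω; simp [Set.mem_pi]
  rw [hpre, h.meas_iInter fun i => ⟨s i, hs i, rfl⟩]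
  exact Finset.prod_congr rfl fun i _ => (Measure.map_apply (hm i) (hs i)).symm

lemma indep_grouped {ι ι' κ E : Type*} [Fintype κ] [MeasurableSpace E]
    {f : ι → Ω → E} (hm : ∀ i, Measurable (f i))
    (h : iIndepFun f μ)
    (e : ι' → κ → ι) (he : Function.Injective fun p : ι' × κ => e p.1 p.2) :
    iIndepFun
      (fun a ω b => f (e a b) ω) μ := by
  classical
  have hea : ∀ a, Function.Injective (e a) := fun a b b' hb => by
    have h2 := he (a₁ := (a, b)) (a₂ := (a, b')) hb
    exact (Prod.ext_iff.mp h2).2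
  set π : ι' → Set (Set Ω) := fun a =>
    {u | ∃ s : κ → Set E, (∀ b, MeasurableSet (s b)) ∧ u = ⋂ b, f (e a b) ⁻¹' s b} with hπ
  rw [iIndepFun_iff_iIndep]
  refine iIndepSets.iIndep (fun a => ?_) π (fun a => ?_) (fun a => ?_) ?_
  · exact MeasurableSpace.comap_le_iff_le_map.mpr
      (measurable_pi_lambda _ fun b => hm (e a b)).le_map
  · rintro u1 ⟨s1, hs1, rfl⟩ u2 ⟨s2, hs2, rfl⟩ -
    refine ⟨fun b => s1 b ∩ s2 b, fun b => (hs1 b).inter (hs2 b), ?_⟩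
    ext ω
    simp only [Set.mem_inter_iff, Set.mem_iInter, Set.mem_preimage, forall_and]
  · have h1 : (MeasurableSpace.pi : MeasurableSpace (κ → E)) =
        MeasurableSpace.generateFrom
          (Set.pi Set.univ '' Set.pi Set.univ fun _ : κ => {s : Set E | MeasurableSet s}) := by
      have h0 := generateFrom_pi_eq (α := fun _ : κ => E)
        fun _ => isCountablySpanning_measurableSet
      convert h0 using 2
      funext _
      exact (MeasurableSpace.generateFrom_measurableSet).symm
    show MeasurableSpace.pi.comap (fun ω b => f (e a b) ω) = MeasurableSpace.generateFrom (π a)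
    rw [h1, MeasurableSpace.comap_generateFrom]
    congr 1
    ext u
    constructor
    · rintro ⟨-, ⟨s, hs, rfl⟩, rfl⟩
      refine ⟨fun b => s b, fun b => hs b (Set.mem_univ b), ?_⟩
      ext ω; simp [Set.mem_pi]
    · rintro ⟨s, hs, rfl⟩
      refine ⟨Set.pi Set.univ s, ⟨s, fun b _ => hs b, rfl⟩, ?_⟩
      ext ω; simp [Set.mem_pi]
  · rw [iIndepSets_iff]
    intro S u H
    have H' : ∀ a, a ∈ S → ∃ s : κ → Set E, (∀ b, MeasurableSet (s b)) ∧
        u a = ⋂ b, f (e a b) ⁻¹' s b := H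
    choose! s hs1 hs2 using H'
    have hpair := indep_precomp h (fun p : ι' × κ => e p.1 p.2) he
    have hL : (⋂ a ∈ S, u a) = ⋂ p ∈ S ×ˢ (Finset.univ : Finset κ),
        f (e p.1 p.2) ⁻¹' s p.1 p.2 := by
      ext ω
      simp only [Set.mem_iInter, Finset.mem_product, Finset.mem_univ, and_true]
      constructor
      · rintro hw ⟨a, b⟩ hp
        have h3 := hw a hp
        rw [hs2 a hp] at h3
        exact Set.mem_iInter.mp h3 b
      · intro hw a ha
        rw [hs2 a ha]
        exact Set.mem_iInter.mpr fun b => hw (a, b) ha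
    have hmeas : ∀ p : ι' × κ, p ∈ S ×ˢ (Finset.univ : Finset κ) →
        MeasurableSet[(inferInstance : MeasurableSpace E).comap
          ((fun p : ι' × κ => f (e p.1 p.2)) p)]
          ((fun p : ι' × κ => f (e p.1 p.2) ⁻¹' s p.1 p.2) p) := by
      rintro ⟨a, b⟩ hp
      rw [Finset.mem_product] at hp
      exact ⟨s a b, hs1 a hp.1 b, rfl⟩
    have hmain := hpair.meas_biInter (S := S ×ˢ (Finset.univ : Finset κ)) hmeas
    rw [hL, hmain, Finset.prod_product]
    refine Finset.prod_congr rfl fun a ha => ?_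
    have hsub := indep_precomp h (e a) (hea a)
    rw [hs2 a ha, hsub.meas_iInter fun b => ⟨s a b, hs1 a ha b, rfl⟩]

end IndepHelpers

section AnalyticHelpers

lemma exp_integral_bound {E : Type*} [MeasurableSpace E] (P : Measure E)
    [IsProbabilityMeasure P] {φ : E → ℝ} (hφm : Measurable φ) {B : ℝ} (hB : 0 < B)
    (hb : ∀ᵐ x ∂P, |φ x| ≤ B) (h0 : ∫ x, φ x ∂P = 0) (r : ℝ) :
    ∫ x, Real.exp (r * φ x) ∂P ≤ Real.exp (r ^ 2 * B ^ 2 / 2) := by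
  have hBne : B ≠ 0 := ne_of_gt hB
  have hφint : Integrable φ P :=
    (integrable_const B).mono' hφm.aestronglyMeasurable (by simpa using hb)
  have hexpint : Integrable (fun x => Real.exp (r * φ x)) P := by
    refine (integrable_const (Real.exp (|r| * B))).mono'
      ((hφm.const_mul r).exp).aestronglyMeasurable ?_
    filter_upwards [hb] with x hx
    rw [Real.norm_eq_abs, Real.abs_exp]
    refine Real.exp_le_exp.mpr ((le_abs_self _).trans ?_)
    rw [abs_mul]
    exact mul_le_mul_of_nonneg_left hx (abs_nonneg r)
  have hpt : ∀ᵐ x ∂P, Real.exp (r * φ x) ≤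
      Real.cosh (r * B) + (Real.sinh (r * B) / B) * φ x := by
    filter_upwards [hb] with x hx
    have hy1 : -B ≤ φ x := neg_le_of_abs_le hx
    have hy2 : φ x ≤ B := le_of_abs_le hx
    have ha : (0:ℝ) ≤ (B - φ x) / (2 * B) := div_nonneg (by linarith) (by linarith)
    have hb' : (0:ℝ) ≤ (B + φ x) / (2 * B) := div_nonneg (by linarith) (by linarith)
    have hab : (B - φ x) / (2 * B) + (B + φ x) / (2 * B) = 1 := by
      field_simp
      ring
    have hcvx := convexOn_exp.2 (Set.mem_univ (-(r * B))) (Set.mem_univ (r * B)) ha hb' hab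
    have harg : ((B - φ x) / (2 * B)) • (-(r * B)) + ((B + φ x) / (2 * B)) • (r * B)
        = r * φ x := by
      simp only [smul_eq_mul]
      rw [div_mul_eq_mul_div, div_mul_eq_mul_div, ← add_div,
        div_eq_iff (by positivity : (0:ℝ) < 2 * B).ne']
      ring
    rw [harg] at hcvx
    refine hcvx.trans (le_of_eq ?_)
    simp only [smul_eq_mul]
    rw [Real.cosh_eq, Real.sinh_eq]
    field_simp
    ring
  calc ∫ x, Real.exp (r * φ x) ∂P
      ≤ ∫ x, (Real.cosh (r * B) + (Real.sinh (r * B) / B) * φ x) ∂P :=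
        integral_mono_ae hexpint ((integrable_const _).add (hφint.const_mul _)) hpt
    _ = Real.cosh (r * B) := by
        rw [integral_add (integrable_const _) (hφint.const_mul _), integral_const_mul, h0,
          integral_const, probReal_univ, one_smul, mul_zero, add_zero]
    _ ≤ Real.exp ((r * B) ^ 2 / 2) := Real.cosh_le_exp_half_sq _
    _ = Real.exp (r ^ 2 * B ^ 2 / 2) := by rw [mul_pow]

lemma empMeas_apply {E : Type*} [MeasurableSpace E] {N : ℕ} (x : Fin N → E) {s : Set E}
    (hs : MeasurableSet s) :
    empMeas x s = (N : ℝ≥0∞)⁻¹ * ∑ k : Fin N, s.indicator 1 (x k) := by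
  rw [empMeas, Measure.smul_apply, smul_eq_mul, Measure.finset_sum_apply]
  congr 1
  exact Finset.sum_congr rfl fun k _ => Measure.dirac_apply' _ hs

lemma empMeas_prob {E : Type*} [MeasurableSpace E] {N : ℕ} (hN : 0 < N) (x : Fin N → E) :
    IsProbabilityMeasure (empMeas x) := by
  constructor
  rw [empMeas_apply x MeasurableSet.univ]
  simp only [Set.indicator_univ, Pi.one_apply, Finset.sum_const, Finset.card_univ,
    Fintype.card_fin, nsmul_eq_mul, mul_one]
  exact ENNReal.inv_mul_cancel (by exact_mod_cast hN.ne') (ENNReal.natCast_ne_top N)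

lemma pi_empMeas {E : Type*} [MeasurableSpace E] {m N : ℕ} (hN : 0 < N) (x : Fin m → Fin N → E) :
    Measure.pi (fun j => empMeas (x j)) =
      ((N : ℝ≥0∞) ^ m)⁻¹ • ∑ k : Fin m → Fin N, Measure.dirac (fun j => x j (k j)) := by
  haveI : ∀ j, IsProbabilityMeasure (empMeas (x j)) := fun j => empMeas_prob hN (x j)
  refine Measure.pi_eq fun s hs => ?_
  rw [Measure.smul_apply, smul_eq_mul, Measure.finset_sum_apply]
  have hind : ∀ y : Fin m → E, (Set.pi Set.univ s).indicator (1 : (Fin m → E) → ℝ≥0∞) y =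
      ∏ j, (s j).indicator (1 : E → ℝ≥0∞) (y j) := by
    intro y
    by_cases hy : y ∈ Set.pi Set.univ s
    · rw [Set.indicator_of_mem hy]
      rw [Set.mem_pi] at hy
      simp only [Pi.one_apply]
      rw [Finset.prod_congr rfl fun j _ =>
        Set.indicator_of_mem (hy j (Set.mem_univ j)) (1 : E → ℝ≥0∞)]
      simp
    · rw [Set.indicator_of_notMem hy]
      rw [Set.mem_pi] at hy
      push_neg at hy
      obtain ⟨j, -, hj⟩ := hy
      exact (Finset.prod_eq_zero (Finset.mem_univ j)
        (by rw [Set.indicator_of_notMem hj])).symm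
  calc ((N : ℝ≥0∞) ^ m)⁻¹ * ∑ k : Fin m → Fin N, Measure.dirac (fun j => x j (k j)) (Set.pi Set.univ s)
      = ((N : ℝ≥0∞) ^ m)⁻¹ * ∑ k : Fin m → Fin N, ∏ j, (s j).indicator 1 (x j (k j)) := by
        congr 1
        refine Finset.sum_congr rfl fun k _ => ?_
        rw [Measure.dirac_apply' _ (MeasurableSet.univ_pi hs), hind]
    _ = ∏ j, empMeas (x j) (s j) := by
        rw [Finset.prod_congr rfl fun j _ => empMeas_apply (x j) (hs j),
          Finset.prod_mul_distrib, Finset.prod_const, Finset.card_univ, Fintype.card_fin,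
          ← ENNReal.inv_pow, Fintype.prod_sum]
    _ = ∏ j, empMeas (x j) (s j) := rfl

lemma integral_pi_empMeas {E : Type*} [MeasurableSpace E] {m N : ℕ} (hN : 0 < N)
    (x : Fin m → Fin N → E) {φ : (Fin m → E) → ℝ} (hφm : Measurable φ) :
    ∫ y, φ y ∂(Measure.pi fun j => empMeas (x j)) =
      ((N : ℝ) ^ m)⁻¹ * ∑ k : Fin m → Fin N, φ (fun j => x j (k j)) := by
  have hdint : ∀ y : Fin m → E, Integrable φ (Measure.dirac y) := by
    intro y
    refine ⟨hφm.aestronglyMeasurable, ?_⟩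
    rw [HasFiniteIntegral]
    rw [lintegral_dirac' y (by exact measurable_coe_nnreal_ennreal.comp hφm.nnnorm)]
    exact ENNReal.coe_lt_top
  rw [pi_empMeas hN x, integral_smul_measure, integral_finset_sum_measure fun k _ => hdint _]
  simp only [integral_dirac' _ _ hφm.stronglyMeasurable]
  rw [ENNReal.toReal_inv, ENNReal.toReal_pow, ENNReal.toReal_natCast, smul_eq_mul]

end AnalyticHelpers


/-- **Concentration of empirical multimarginal distributions.** If
`φ ∈ L^∞(ν₁⊗⋯⊗ν_m)` has `∫ φ d(ν₁⊗⋯⊗ν_m) = 0`, then for every `t > 0`, with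
probability at least `1 − 2e^{−t}` over i.i.d. samples `X j k ∼ ν j` (independent
across marginals), `|∫ φ d(ν̂₁^N ⊗ ⋯ ⊗ ν̂_m^N)| ≤ ‖φ‖_∞ √(2t/N)`. -/
theorem empirical_multimarginal_concentration {d m : ℕ} (hm : 0 < m)
    (𝒳 : Set (Euc d)) (h𝒳c : IsCompact 𝒳) (h𝒳b : ∀ x ∈ 𝒳, ∀ i, |x i| ≤ 1)
    (h𝒳int : (interior 𝒳).Nonempty)
    (ν : Fin m → Measure (Euc d)) (hν : ∀ j, IsProbabilityMeasure (ν j))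
    (hνsupp : ∀ j, ν j 𝒳 = 1)
    (Ω : Type) [MeasurableSpace Ω] (μ : Measure Ω) (hμ : IsProbabilityMeasure μ)
    (N : ℕ) (hN : 0 < N)
    (X : Fin m → Fin N → Ω → Euc d)
    (hXm : ∀ j k, Measurable (X j k))
    (hXlaw : ∀ j k, μ.map (X j k) = ν j)
    (hXindep : iIndepFun
      (fun (p : Fin m × Fin N) ω => X p.1 p.2 ω) μ)
    (φ : (Fin m → Euc d) → ℝ) (hφm : Measurable φ)
    (B : ℝ) (hφb : ∀ᵐ x ∂(Measure.pi ν), |φ x| ≤ B)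
    (hφ0 : ∫ x, φ x ∂(Measure.pi ν) = 0) :
    ∀ t : ℝ, 0 < t →
      ENNReal.ofReal (1 - 2 * Real.exp (-t)) ≤
        μ {ω | |∫ x, φ x ∂(Measure.pi (fun j => empMeas (fun k => X j k ω)))| ≤
          B * Real.sqrt (2 * t / N)} := by
  intro t ht
  classical
  haveI : NeZero N := ⟨hN.ne'⟩
  haveI hμ' : IsProbabilityMeasure μ := hμ
  haveI hν' : ∀ j, IsProbabilityMeasure (ν j) := hν
  have hNneR : (N : ℝ) ≠ 0 := Nat.cast_ne_zero.mpr hN.ne'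
  have hNposR : (0 : ℝ) < N := by exact_mod_cast hN
  set P : Measure (Fin m → Euc d) := Measure.pi ν with hPdef
  haveI hPprob : IsProbabilityMeasure P := by rw [hPdef]; infer_instance
  -- the random vectors
  set V : (Fin m → Fin N) → Ω → (Fin m → Euc d) := fun k ω j => X j (k j) ω with hVdef
  have hVm : ∀ k, Measurable (V k) := fun k => measurable_pi_lambda _ fun j => hXm j (k j)
  have hVlaw : ∀ k, μ.map (V k) = P := by
    intro k
    have hk : Function.Injective fun j : Fin m => ((j, k j) : Fin m × Fin N) :=
      fun a b hab => congrArg Prod.fst hab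
    have hind := indep_precomp hXindep (fun j : Fin m => ((j, k j) : Fin m × Fin N)) hk
    have hmap := joint_law (fun j => hXm j (k j)) hind
    rw [hPdef]
    calc μ.map (V k) = Measure.pi (fun j => μ.map fun ω => X j (k j) ω) := hmap
      _ = Measure.pi ν := by congr 1; funext j; exact hXlaw j (k j)
  have hφset : MeasurableSet {x : Fin m → Euc d | |φ x| ≤ B} :=
    measurableSet_le hφm.abs measurable_const
  have hZae : ∀ᵐ ω ∂μ, ∀ k : Fin m → Fin N, |φ (V k ω)| ≤ B := by
    rw [ae_all_iff]
    intro k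
    have h1 : ∀ᵐ y ∂(μ.map (V k)), |φ y| ≤ B := by rw [hVlaw k]; exact hφb
    exact (ae_map_iff (hVm k).aemeasurable hφset).mp h1
  have hBnn : 0 ≤ B := by
    haveI : (ae P).NeBot := ae_neBot.mpr (IsProbabilityMeasure.ne_zero P)
    obtain ⟨x, hx⟩ := hφb.exists
    exact (abs_nonneg _).trans hx
  set κ0 : ℝ := ((N : ℝ) ^ m)⁻¹ with hκ0def
  have hκ0pos : 0 < κ0 := by rw [hκ0def]; positivity
  set F : Ω → ℝ := fun ω => κ0 * ∑ k : Fin m → Fin N, φ (V k ω) with hFdef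
  have hFm : Measurable F := (Finset.measurable_sum Finset.univ fun k _ =>
    hφm.comp (hVm k)).const_mul κ0
  have hcardR : ((Fintype.card (Fin m → Fin N) : ℕ) : ℝ) = (N : ℝ) ^ m := by simp
  have hFeq : ∀ ω, (∫ x, φ x ∂(Measure.pi fun j => empMeas fun k => X j k ω)) = F ω := by
    intro ω
    rw [integral_pi_empMeas hN (fun j k => X j k ω) hφm]
  set a : ℝ := B * Real.sqrt (2 * t / N) with hadef
  have ha0 : 0 ≤ a := mul_nonneg hBnn (Real.sqrt_nonneg _)
  set S : Set Ω := {ω | |F ω| ≤ a} with hSdef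
  have hSm : MeasurableSet S := measurableSet_le hFm.abs measurable_const
  have hgoalset : {ω | |∫ x, φ x ∂(Measure.pi (fun j => empMeas (fun k => X j k ω)))| ≤ a}
      = S := Set.ext fun ω => by rw [Set.mem_setOf_eq, hFeq ω]; rfl
  rw [hgoalset]
  suffices hcompl : μ Sᶜ ≤ ENNReal.ofReal (2 * Real.exp (-t)) by
    have h1 : (1 : ℝ≥0∞) ≤ μ S + μ Sᶜ := by
      have h2 := measure_union_le (μ := μ) S Sᶜ
      rwa [Set.union_compl_self, measure_univ] at h2
    calc ENNReal.ofReal (1 - 2 * Real.exp (-t))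
        = 1 - ENNReal.ofReal (2 * Real.exp (-t)) := by
          rw [ENNReal.ofReal_sub _ (by positivity), ENNReal.ofReal_one]
      _ ≤ μ S := by
          rw [tsub_le_iff_right]
          calc (1 : ℝ≥0∞) ≤ μ S + μ Sᶜ := h1
            _ ≤ μ S + ENNReal.ofReal (2 * Real.exp (-t)) := add_le_add_right hcompl _
  rcases eq_or_lt_of_le hBnn with hB0 | hB
  · -- degenerate case B = 0
    have hae : ∀ᵐ ω ∂μ, ω ∈ S := by
      filter_upwards [hZae] with ω hω
      have hz : ∀ k, φ (V k ω) = 0 := fun k =>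
        abs_eq_zero.mp (le_antisymm (by simpa [← hB0] using hω k) (abs_nonneg _))
      show |F ω| ≤ a
      have hF0 : F ω = 0 := by
        rw [hFdef]; simp [hz]
      simp [hF0, hadef, ← hB0]
    have h0 : μ Sᶜ = 0 := ae_iff.mp hae
    rw [h0]
    exact zero_le
  · -- main case 0 < B
    have hint : ∀ (r : ℝ) (g : Ω → ℝ), Measurable g → (∀ᵐ ω ∂μ, |g ω| ≤ B) →
        Integrable (fun ω => Real.exp (r * g ω)) μ := by
      intro r g hgm hgb
      refine (integrable_const (Real.exp (|r| * B))).mono'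
        ((hgm.const_mul r).exp).aestronglyMeasurable ?_
      filter_upwards [hgb] with ω h
      rw [Real.norm_eq_abs, Real.abs_exp]
      refine Real.exp_le_exp.mpr ((le_abs_self _).trans ?_)
      rw [abs_mul]
      exact mul_le_mul_of_nonneg_left h (abs_nonneg r)
    have hFae : ∀ᵐ ω ∂μ, |F ω| ≤ B := by
      filter_upwards [hZae] with ω hω
      rw [hFdef]
      calc |κ0 * ∑ k : Fin m → Fin N, φ (V k ω)|
          = κ0 * |∑ k : Fin m → Fin N, φ (V k ω)| := by
            rw [abs_mul, abs_of_pos hκ0pos]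
        _ ≤ κ0 * ∑ k : Fin m → Fin N, B := by
            refine mul_le_mul_of_nonneg_left ((Finset.abs_sum_le_sum_abs _ _).trans
              (Finset.sum_le_sum fun k _ => hω k)) hκ0pos.le
        _ = B := by
            rw [Finset.sum_const, Finset.card_univ, nsmul_eq_mul, hcardR, hκ0def,
              ← mul_assoc, inv_mul_cancel₀ (by positivity), one_mul]
    -- the shifted group averages
    set W : (Fin m → Fin N) → Ω → ℝ :=
      fun c ω => (N : ℝ)⁻¹ * ∑ i : Fin N, φ (V (fun j => c j + i) ω) with hWdef
    have hWm : ∀ c, Measurable (W c) := fun c =>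
      (Finset.measurable_sum Finset.univ fun i _ => hφm.comp (hVm _)).const_mul _
    have hWae : ∀ᵐ ω ∂μ, ∀ c, |W c ω| ≤ B := by
      filter_upwards [hZae] with ω hω c
      rw [hWdef]
      calc |(N : ℝ)⁻¹ * ∑ i : Fin N, φ (V (fun j => c j + i) ω)|
          = (N : ℝ)⁻¹ * |∑ i : Fin N, φ (V (fun j => c j + i) ω)| := by
            rw [abs_mul, abs_of_pos (inv_pos.mpr hNposR)]
        _ ≤ (N : ℝ)⁻¹ * ∑ i : Fin N, B := by
            refine mul_le_mul_of_nonneg_left ((Finset.abs_sum_le_sum_abs _ _).trans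
              (Finset.sum_le_sum fun i _ => hω _)) (inv_pos.mpr hNposR).le
        _ = B := by
            rw [Finset.sum_const, Finset.card_univ, Fintype.card_fin, nsmul_eq_mul,
              ← mul_assoc, inv_mul_cancel₀ hNneR, one_mul]
    -- grouped independence
    have hgrp : ∀ c : Fin m → Fin N,
        iIndepFun (fun i ω => φ (V (fun j => c j + i) ω)) μ := by
      intro c
      have he : Function.Injective fun p : Fin N × Fin m => ((p.2, c p.2 + p.1) : Fin m × Fin N) := by
        intro p q hpq
        have h2 : p.2 = q.2 := congrArg Prod.fst hpq
        have h1 : c p.2 + p.1 = c q.2 + q.1 := congrArg Prod.snd hpq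
        rw [h2] at h1
        exact Prod.ext (add_left_cancel h1) h2
      have hgv := indep_grouped (fun p : Fin m × Fin N => hXm p.1 p.2) hXindep
        (fun (i : Fin N) (j : Fin m) => ((j, c j + i) : Fin m × Fin N)) he
      exact hgv.comp (fun _ => φ) (fun _ => hφm)
    -- mgf of a single term
    have hmgfZ : ∀ (k : Fin m → Fin N) (r : ℝ),
        mgf (fun ω => φ (V k ω)) μ r ≤ Real.exp (r ^ 2 * B ^ 2 / 2) := by
      intro k r
      have hmeq : mgf (fun ω => φ (V k ω)) μ r = ∫ y, Real.exp (r * φ y) ∂P := by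
        rw [mgf, ← hVlaw k,
          integral_map (hVm k).aemeasurable ((hφm.const_mul r).exp).aestronglyMeasurable]
      rw [hmeq]
      exact exp_integral_bound P hφm hB hφb hφ0 r
    -- mgf of a group average
    have hmgfW : ∀ (c : Fin m → Fin N) (r : ℝ),
        ∫ ω, Real.exp (r * W c ω) ∂μ ≤ Real.exp (r ^ 2 * B ^ 2 / (2 * N)) := by
      intro c r
      have hsum : (∑ i : Fin N, fun ω => φ (V (fun j => c j + i) ω)) =
          fun ω => ∑ i : Fin N, φ (V (fun j => c j + i) ω) := by
        funext ω; rw [Finset.sum_apply]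
      calc ∫ ω, Real.exp (r * W c ω) ∂μ
          = mgf (∑ i : Fin N, fun ω => φ (V (fun j => c j + i) ω)) μ (r / N) := by
            rw [mgf, hsum]
            congr 1
            funext ω
            rw [hWdef]
            congr 1
            rw [← mul_assoc, ← div_eq_mul_inv]
        _ = ∏ i : Fin N, mgf (fun ω => φ (V (fun j => c j + i) ω)) μ (r / N) :=
            (hgrp c).mgf_sum (fun i => hφm.comp (hVm _)) Finset.univ
        _ ≤ ∏ _i : Fin N, Real.exp ((r / N) ^ 2 * B ^ 2 / 2) :=
            Finset.prod_le_prod (fun i _ => mgf_nonneg) (fun i _ => hmgfZ _ _)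
        _ = Real.exp (r ^ 2 * B ^ 2 / (2 * N)) := by
            rw [Finset.prod_const, Finset.card_univ, Fintype.card_fin, ← Real.exp_nat_mul]
            congr 1
            field_simp
    -- decomposition of F as centroid of the W c
    have hswap : ∀ ω, ∑ c : Fin m → Fin N, ∑ i : Fin N, φ (V (fun j => c j + i) ω)
        = N * ∑ k : Fin m → Fin N, φ (V k ω) := by
      intro ω
      rw [Finset.sum_comm]
      have hsh : ∀ i : Fin N, ∑ c : Fin m → Fin N, φ (V (fun j => c j + i) ω)
          = ∑ k : Fin m → Fin N, φ (V k ω) := by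
        intro i
        exact Fintype.sum_equiv (Equiv.piCongrRight fun _ : Fin m => Equiv.addRight i)
          _ _ (fun c => rfl)
      rw [Finset.sum_congr rfl fun i _ => hsh i, Finset.sum_const, Finset.card_univ,
        Fintype.card_fin, nsmul_eq_mul]
    have hFW : ∀ ω, F ω = ∑ c : Fin m → Fin N, κ0 * W c ω := by
      intro ω
      rw [← Finset.mul_sum]
      rw [hFdef]
      congr 1
      simp only [hWdef]
      rw [← Finset.mul_sum, hswap ω, ← mul_assoc ((N:ℝ))⁻¹,
        inv_mul_cancel₀ hNneR, one_mul]
    -- mgf of F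
    have hmgfF : ∀ r : ℝ, mgf F μ r ≤ Real.exp (r ^ 2 * B ^ 2 / (2 * N)) := by
      intro r
      have hWsum : ∑ c : Fin m → Fin N, κ0 = 1 := by
        rw [Finset.sum_const, Finset.card_univ, nsmul_eq_mul, hcardR, hκ0def,
          mul_inv_cancel₀ (by positivity)]
      have hintW : ∀ c : Fin m → Fin N, Integrable (fun ω => Real.exp (r * W c ω)) μ :=
        fun c => hint r (W c) (hWm c) (hWae.mono fun ω h => h c)
      calc mgf F μ r
          ≤ ∫ ω, ∑ c : Fin m → Fin N, κ0 * Real.exp (r * W c ω) ∂μ := by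
            rw [mgf]
            refine integral_mono_ae (hint r F hFm hFae)
              (integrable_finset_sum _ fun c _ => (hintW c).const_mul κ0)
              (ae_of_all _ fun ω => ?_)
            show Real.exp (r * F ω) ≤ ∑ c : Fin m → Fin N, κ0 * Real.exp (r * W c ω)
            have h1 : r * F ω = ∑ c : Fin m → Fin N, κ0 • (r * W c ω) := by
              rw [hFW ω, Finset.mul_sum]
              exact Finset.sum_congr rfl fun c _ => by rw [smul_eq_mul]; ring
            rw [h1]
            have h2 := convexOn_exp.map_sum_le (t := Finset.univ)
              (w := fun _ : Fin m → Fin N => κ0) (p := fun c => r * W c ω)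
              (fun c _ => hκ0pos.le) hWsum (fun c _ => Set.mem_univ _)
            simpa [smul_eq_mul] using h2
        _ = ∑ c : Fin m → Fin N, κ0 * ∫ ω, Real.exp (r * W c ω) ∂μ := by
            rw [integral_finset_sum _ fun c _ => (hintW c).const_mul κ0]
            exact Finset.sum_congr rfl fun c _ => integral_const_mul κ0 _
        _ ≤ ∑ _c : Fin m → Fin N, κ0 * Real.exp (r ^ 2 * B ^ 2 / (2 * N)) :=
            Finset.sum_le_sum fun c _ => mul_le_mul_of_nonneg_left (hmgfW c r) hκ0pos.le
        _ = Real.exp (r ^ 2 * B ^ 2 / (2 * N)) := by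
            rw [Finset.sum_const, Finset.card_univ, nsmul_eq_mul, hcardR, hκ0def,
              ← mul_assoc, mul_inv_cancel₀ (by positivity), one_mul]
    -- Chernoff bounds
    have ha2 : a ^ 2 = B ^ 2 * (2 * t / N) := by
      rw [hadef, mul_pow, Real.sq_sqrt (div_nonneg (by linarith) hNposR.le)]
    have key : a ^ 2 * N = 2 * t * B ^ 2 := by
      rw [ha2]; field_simp
    set lam : ℝ := a * N / B ^ 2 with hlamdef
    have hB2 : (0:ℝ) < B ^ 2 := by positivity
    have hlamnn : 0 ≤ lam := div_nonneg (mul_nonneg ha0 hNposR.le) hB2.le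
    have e4 : a ^ 2 * N / B ^ 2 = 2 * t := by rw [key]; field_simp
    have e3 : a ^ 2 * N / (2 * B ^ 2) = t := by rw [key]; field_simp
    have hexp : -lam * a + lam ^ 2 * B ^ 2 / (2 * N) = -t := by
      have e1 : lam * a = a ^ 2 * N / B ^ 2 := by rw [hlamdef]; ring
      have e2 : lam ^ 2 * B ^ 2 / (2 * N) = a ^ 2 * N / (2 * B ^ 2) := by
        rw [hlamdef]; field_simp
      rw [neg_mul, e1, e2, e4, e3]; ring
    have hupper : (μ {ω | a ≤ F ω}).toReal ≤ Real.exp (-t) := by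
      calc (μ {ω | a ≤ F ω}).toReal
          ≤ Real.exp (-lam * a) * mgf F μ lam :=
            measure_ge_le_exp_mul_mgf a hlamnn (hint lam F hFm hFae)
        _ ≤ Real.exp (-lam * a) * Real.exp (lam ^ 2 * B ^ 2 / (2 * N)) :=
            mul_le_mul_of_nonneg_left (hmgfF lam) (Real.exp_pos _).le
        _ = Real.exp (-lam * a + lam ^ 2 * B ^ 2 / (2 * N)) := (Real.exp_add _ _).symm
        _ = Real.exp (-t) := by rw [hexp]
    have hlower : (μ {ω | F ω ≤ -a}).toReal ≤ Real.exp (-t) := by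
      calc (μ {ω | F ω ≤ -a}).toReal
          ≤ Real.exp (-(-lam) * -a) * mgf F μ (-lam) :=
            measure_le_le_exp_mul_mgf (-a) (neg_nonpos.mpr hlamnn) (hint (-lam) F hFm hFae)
        _ ≤ Real.exp (-(-lam) * -a) * Real.exp ((-lam) ^ 2 * B ^ 2 / (2 * N)) :=
            mul_le_mul_of_nonneg_left (hmgfF (-lam)) (Real.exp_pos _).le
        _ = Real.exp (-lam * a + lam ^ 2 * B ^ 2 / (2 * N)) := by
            rw [← Real.exp_add, neg_sq]
            congr 1
            ring
        _ = Real.exp (-t) := by rw [hexp]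
    have hsub : Sᶜ ⊆ {ω | a ≤ F ω} ∪ {ω | F ω ≤ -a} := by
      intro ω hω
      have hω' : a < |F ω| := by
        have : ¬ |F ω| ≤ a := hω
        linarith [not_le.mp this]
      rcases lt_abs.mp hω' with h | h
      · exact Or.inl h.le
      · exact Or.inr (by simp only [Set.mem_setOf_eq]; linarith)
    have hμA : μ {ω | a ≤ F ω} ≤ ENNReal.ofReal (Real.exp (-t)) :=
      (ENNReal.le_ofReal_iff_toReal_le (measure_ne_top μ _) (Real.exp_pos _).le).mpr hupper
    have hμB : μ {ω | F ω ≤ -a} ≤ ENNReal.ofReal (Real.exp (-t)) :=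
      (ENNReal.le_ofReal_iff_toReal_le (measure_ne_top μ _) (Real.exp_pos _).le).mpr hlower
    calc μ Sᶜ ≤ μ ({ω | a ≤ F ω} ∪ {ω | F ω ≤ -a}) := measure_mono hsub
      _ ≤ μ {ω | a ≤ F ω} + μ {ω | F ω ≤ -a} := measure_union_le _ _
      _ ≤ ENNReal.ofReal (Real.exp (-t)) + ENNReal.ofReal (Real.exp (-t)) := add_le_add hμA hμB
      _ = ENNReal.ofReal (2 * Real.exp (-t)) := by
          rw [← ENNReal.ofReal_add (Real.exp_pos _).le (Real.exp_pos _).le, two_mul]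
end
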